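/- arXiv:2603.11581 — 6 statements merged into one kernel-verified Lean document; each statement's English description precedes it below -/
import Mathlib

section
/- Action of the autoparallel equation, affinely parametrized (Main Theorem): Let U ⊆ ℝⁿ be open and H : U → (Fin n → Fin n → ℝ) smooth with H(x) symmetric and invertible for every x. Let γ : I → U be a smooth curve on an open interval I with Σ_{a,b} H_{ab}(γ(λ)) γ'^a(λ) γ'^b(λ) ≠ 0 for all λ ∈ I, and set 𝓛(λ) := √|Σ_{a,b} H_{ab}(γ(λ)) γ'^a(λ) γ'^b(λ)|. Assume γ satisfies the Euler–Lagrange equations: for every index a and every λ ∈ I, d/dλ [ (1/𝓛(λ)) Σ_b H_{ab}(γ(λ)) γ'^b(λ) ] = (1/(2𝓛(λ))) Σ_{b,c} ∂_a H_{bc}(γ(λ)) γ'^b(λ) γ'^c(λ). Assume further that 𝓛 is constant on I (affine parametrization). Then γ satisfies the autoparallel equation of the Christoffel symbols of H: for all λ ∈ I and all a, γ''^a(λ) + Σ_{b,c} Γ[H]^a_{bc}(γ(λ)) γ'^b(λ) γ'^c(λ) = 0. -/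
open scoped BigOperators

/-- Partial derivative of `f` in the `a`-th coordinate direction of `ℝⁿ`. -/
noncomputable def pd {n : ℕ} (f : (Fin n → ℝ) → ℝ) (a : Fin n) (x : Fin n → ℝ) : ℝ :=
  fderiv ℝ f x (Pi.single a 1)

/-- Matrix inverse of a square array of reals. -/
noncomputable def minv {n : ℕ} (A : Fin n → Fin n → ℝ) : Fin n → Fin n → ℝ :=
  fun a b => (Matrix.of A)⁻¹ a b

/-- Christoffel symbols `Γ[H]^a_{bc}(x)` of a (pointwise symmetric, invertible) tensor `H`. -/
noncomputable def christoffel {n : ℕ} (H : (Fin n → ℝ) → Fin n → Fin n → ℝ)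
    (x : Fin n → ℝ) (a b c : Fin n) : ℝ :=
  (1 / 2) * ∑ d, minv (H x) a d *
    (pd (fun y => H y c d) b x + pd (fun y => H y b d) c x - pd (fun y => H y b c) d x)

/-- First derivative `γ'^a(t)` of a curve in `ℝⁿ`. -/
noncomputable def cderiv {n : ℕ} (γ : ℝ → Fin n → ℝ) (a : Fin n) (t : ℝ) : ℝ :=
  deriv (fun s => γ s a) t

/-- Second derivative `γ''^a(t)` of a curve in `ℝⁿ`. -/
noncomputable def cderiv2 {n : ℕ} (γ : ℝ → Fin n → ℝ) (a : Fin n) (t : ℝ) : ℝ :=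
  deriv (cderiv γ a) t

/-- The worldline Lagrangian `𝓛(λ) = √|Σ_{a,b} H_{ab}(γ(λ)) γ'^a(λ) γ'^b(λ)|`. -/
noncomputable def lag {n : ℕ} (H : (Fin n → ℝ) → Fin n → Fin n → ℝ)
    (γ : ℝ → Fin n → ℝ) (t : ℝ) : ℝ :=
  Real.sqrt |∑ a, ∑ b, H (γ t) a b * cderiv γ a t * cderiv γ b t|

/-- **Action of the autoparallel equation, affinely parametrized** (Main Theorem): if `γ`
satisfies the Euler–Lagrange equations of `𝓛 = √|H_{ab} γ'^a γ'^b|` and `𝓛` is constant on `I`,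
then `γ` satisfies the autoparallel equation of the Christoffel symbols of `H`. -/
theorem autoparallel_from_action_affine {n : ℕ} (U : Set (Fin n → ℝ)) (hU : IsOpen U)
    (H : (Fin n → ℝ) → Fin n → Fin n → ℝ)
    (hH : ContDiffOn ℝ (⊤ : ℕ∞) H U)
    (hHsym : ∀ x ∈ U, ∀ a b, H x a b = H x b a)
    (hHinv : ∀ x ∈ U, IsUnit (Matrix.of (H x)).det)
    (I : Set ℝ) (hI : IsOpen I) (hIconn : IsPreconnected I)
    (γ : ℝ → Fin n → ℝ) (hγ : ContDiffOn ℝ (⊤ : ℕ∞) γ I)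
    (hmaps : ∀ t ∈ I, γ t ∈ U)
    (hne : ∀ t ∈ I, (∑ a, ∑ b, H (γ t) a b * cderiv γ a t * cderiv γ b t) ≠ 0)
    (hEL : ∀ a, ∀ t ∈ I,
      deriv (fun s => (1 / lag H γ s) * ∑ b, H (γ s) a b * cderiv γ b s) t =
        (1 / (2 * lag H γ t)) *
          ∑ b, ∑ c, pd (fun y => H y b c) a (γ t) * cderiv γ b t * cderiv γ c t)
    (haffine : ∀ t ∈ I, ∀ s ∈ I, lag H γ t = lag H γ s) :
    ∀ t ∈ I, ∀ a, cderiv2 γ a t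
      + ∑ b, ∑ c, christoffel H (γ t) a b c * cderiv γ b t * cderiv γ c t = 0 := by
  intro t ht a
  have hxU : γ t ∈ U := hmaps t ht
  set x := γ t with hxdef
  -- γ is differentiable at t
  have hγdiff : DifferentiableAt ℝ γ t :=
    (hγ.contDiffAt (hI.mem_nhds ht)).differentiableAt (by simp)
  have hdγ : HasDerivAt γ (deriv γ t) t := hγdiff.hasDerivAt
  have hcomp : ∀ b, HasDerivAt (fun s => γ s b) (deriv γ t b) t := fun b => by
    exact (ContinuousLinearMap.proj b).hasFDerivAt.comp_hasDerivAt t hdγ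
  have hvb : ∀ b, cderiv γ b t = deriv γ t b := fun b => (hcomp b).deriv
  -- first derivatives are smooth on I
  have hcd : ∀ b, ContDiffOn ℝ (⊤ : ℕ∞) (cderiv γ b) I := by
    intro b
    have h1 : ContDiffOn ℝ (⊤ : ℕ∞) (fun s => γ s b) I := by
      simpa [Function.comp_def] using
        (ContinuousLinearMap.proj b).contDiff.comp_contDiffOn hγ
    exact h1.deriv_of_isOpen hI (by simp)
  have hv2 : ∀ b, HasDerivAt (cderiv γ b) (cderiv2 γ b t) t := fun b =>
    (((hcd b).contDiffAt (hI.mem_nhds ht)).differentiableAt (by simp)).hasDerivAt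
  -- entries of H are smooth at x
  have hHab : ∀ p q : Fin n, ContDiffAt ℝ (⊤ : ℕ∞) (fun y => H y p q) x := by
    intro p q
    have h0 : ContDiffAt ℝ (⊤ : ℕ∞) H x := hH.contDiffAt (hU.mem_nhds hxU)
    have h1 : ContDiff ℝ (⊤ : ℕ∞) (fun M : Fin n → Fin n → ℝ => M p q) :=
      ((ContinuousLinearMap.proj q).comp
        (ContinuousLinearMap.proj p : ((Fin n → Fin n → ℝ)) →L[ℝ] (Fin n → ℝ))).contDiff
    exact h1.contDiffAt.comp x h0
  -- chain rule for H along γ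
  have hfd : ∀ p q : Fin n, HasDerivAt (fun s => H (γ s) p q)
      (∑ c, cderiv γ c t * pd (fun y => H y p q) c x) t := by
    intro p q
    have hdiff : DifferentiableAt ℝ (fun y => H y p q) x :=
      (hHab p q).differentiableAt (by simp)
    have h2 := hdiff.hasFDerivAt.comp_hasDerivAt t hdγ
    have h3 : fderiv ℝ (fun y => H y p q) x (deriv γ t) =
        ∑ c, cderiv γ c t * pd (fun y => H y p q) c x := by
      have hrep : deriv γ t = ∑ c, deriv γ t c • (Pi.single c 1 : Fin n → ℝ) := by
        funext j; simp [Pi.single_apply]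
      conv_lhs => rw [hrep]
      rw [map_sum]
      simp [pd, hvb]
    rw [← h3]
    exact h2
  -- derivative of s ↦ ∑ b, H (γ s) d b * γ'^b(s)
  have hFd : ∀ d : Fin n, HasDerivAt (fun s => ∑ b, H (γ s) d b * cderiv γ b s)
      (∑ b, ((∑ c, cderiv γ c t * pd (fun y => H y d b) c x) * cderiv γ b t
              + H x d b * cderiv2 γ b t)) t := by
    intro d
    exact HasDerivAt.fun_sum (fun b _ => (hfd d b).mul (hv2 b))
  -- positivity of the Lagrangian
  have hLpos : 0 < lag H γ t := by
    unfold lag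
    exact Real.sqrt_pos.2 (abs_pos.2 (hne t ht))
  have hLne : lag H γ t ≠ 0 := ne_of_gt hLpos
  have e3 : lag H γ t / (2 * lag H γ t) = 1 / 2 := by
    rw [div_eq_div_iff (by positivity) (by norm_num)]; ring
  -- the reduced Euler–Lagrange equation
  have key : ∀ d : Fin n,
      (∑ b, ((∑ c, cderiv γ c t * pd (fun y => H y d b) c x) * cderiv γ b t
              + H x d b * cderiv2 γ b t))
      = (1 / 2) * ∑ b, ∑ c, pd (fun y => H y b c) d x * cderiv γ b t * cderiv γ c t := by
    intro d
    have hev : (fun s => (1 / lag H γ s) * ∑ b, H (γ s) d b * cderiv γ b s)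
        =ᶠ[nhds t] fun s => (1 / lag H γ t) * ∑ b, H (γ s) d b * cderiv γ b s := by
      filter_upwards [hI.mem_nhds ht] with s hs
      rw [haffine t ht s hs]
    have h1 := hEL d t ht
    rw [hev.deriv_eq, ((hFd d).const_mul (1 / lag H γ t)).deriv] at h1
    have h2 := congrArg (fun z => lag H γ t * z) h1
    simp only [← mul_assoc] at h2
    rw [mul_one_div, div_self hLne, one_mul, mul_one_div, e3] at h2
    exact h2
  -- symmetry of partial derivatives of H in the two lower indices
  have hPsym : ∀ p q c, pd (fun y => H y p q) c x = pd (fun y => H y q p) c x := by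
    intro p q c
    unfold pd
    congr 1
    apply Filter.EventuallyEq.fderiv_eq
    filter_upwards [hU.mem_nhds hxU] with y hy
    exact hHsym y hy p q
  -- the inverse matrix identity
  have hinv : ∀ p q : Fin n, (∑ d, minv (H x) p d * H x d q) = if p = q then 1 else 0 := by
    intro p q
    have h1 : (Matrix.of (H x))⁻¹ * Matrix.of (H x) = 1 :=
      Matrix.nonsing_inv_mul _ (hHinv x hxU)
    have h2 := congrFun (congrFun h1 p) q
    rw [Matrix.mul_apply] at h2
    simpa [minv, Matrix.one_apply] using h2
  -- main pointwise identity : H_{db} γ''^b = -K_d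
  have hmain : ∀ d, (∑ b, H x d b * cderiv2 γ b t)
      = -((1 / 2) * ∑ b, ∑ c, (pd (fun y => H y c d) b x + pd (fun y => H y b d) c x
            - pd (fun y => H y b c) d x) * cderiv γ b t * cderiv γ c t) := by
    intro d
    have hk := key d
    rw [Finset.sum_add_distrib] at hk
    have e1 : (∑ b, (∑ c, cderiv γ c t * pd (fun y => H y d b) c x) * cderiv γ b t)
        = ∑ b, ∑ c, pd (fun y => H y b d) c x * cderiv γ b t * cderiv γ c t := by
      apply Finset.sum_congr rfl; intro b _
      rw [Finset.sum_mul]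
      apply Finset.sum_congr rfl; intro c _
      rw [hPsym d b]
      ring
    have e2 : (∑ b, ∑ c, pd (fun y => H y b d) c x * cderiv γ b t * cderiv γ c t)
        = ∑ b, ∑ c, pd (fun y => H y c d) b x * cderiv γ b t * cderiv γ c t := by
      rw [Finset.sum_comm]
      exact Finset.sum_congr rfl fun b _ => Finset.sum_congr rfl fun c _ => by ring
    have hS : (∑ b, (∑ c, cderiv γ c t * pd (fun y => H y d b) c x) * cderiv γ b t)
        = (1 / 2) * ((∑ b, ∑ c, pd (fun y => H y c d) b x * cderiv γ b t * cderiv γ c t)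
          + (∑ b, ∑ c, pd (fun y => H y b d) c x * cderiv γ b t * cderiv γ c t)) := by
      linarith [e1, e2]
    have hsplit : (∑ b, ∑ c, (pd (fun y => H y c d) b x + pd (fun y => H y b d) c x
          - pd (fun y => H y b c) d x) * cderiv γ b t * cderiv γ c t)
        = (∑ b, ∑ c, pd (fun y => H y c d) b x * cderiv γ b t * cderiv γ c t)
          + (∑ b, ∑ c, pd (fun y => H y b d) c x * cderiv γ b t * cderiv γ c t)
          - ∑ b, ∑ c, pd (fun y => H y b c) d x * cderiv γ b t * cderiv γ c t := by
      rw [← Finset.sum_add_distrib, ← Finset.sum_sub_distrib]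
      apply Finset.sum_congr rfl; intro b _
      rw [← Finset.sum_add_distrib, ← Finset.sum_sub_distrib]
      apply Finset.sum_congr rfl; intro c _
      ring
    rw [hsplit]
    linarith [hk, hS]
  -- transport by the inverse matrix
  have hfin : ∀ w : Fin n → ℝ, (∑ d, minv (H x) a d * ∑ b, H x d b * w b) = w a := by
    intro w
    calc (∑ d, minv (H x) a d * ∑ b, H x d b * w b)
        = ∑ d, ∑ b, minv (H x) a d * H x d b * w b := by
          apply Finset.sum_congr rfl; intro d _
          rw [Finset.mul_sum]
          exact Finset.sum_congr rfl fun b _ => by ring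
      _ = ∑ b, ∑ d, minv (H x) a d * H x d b * w b := Finset.sum_comm
      _ = ∑ b, (∑ d, minv (H x) a d * H x d b) * w b := by
          exact Finset.sum_congr rfl fun b _ => (Finset.sum_mul _ _ _).symm
      _ = ∑ b, (if a = b then 1 else 0) * w b := by
          exact Finset.sum_congr rfl fun b _ => by rw [hinv a b]
      _ = w a := by simp
  -- rearranging the Christoffel sum
  have swap3 : ∀ X : Fin n → Fin n → Fin n → ℝ,
      (∑ b, ∑ c, ∑ d, X b c d) = ∑ d, ∑ b, ∑ c, X b c d := by
    intro X
    rw [show (∑ b, ∑ c, ∑ d, X b c d) = ∑ b, ∑ d, ∑ c, X b c d from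
      Finset.sum_congr rfl fun _ _ => Finset.sum_comm]
    exact Finset.sum_comm
  have hchr : (∑ b, ∑ c, christoffel H x a b c * cderiv γ b t * cderiv γ c t)
      = ∑ d, minv (H x) a d * ((1 / 2) * ∑ b, ∑ c, (pd (fun y => H y c d) b x
          + pd (fun y => H y b d) c x - pd (fun y => H y b c) d x)
            * cderiv γ b t * cderiv γ c t) := by
    have e1 : (∑ b, ∑ c, christoffel H x a b c * cderiv γ b t * cderiv γ c t)
        = ∑ b, ∑ c, ∑ d, minv (H x) a d * ((1 / 2) * ((pd (fun y => H y c d) b x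
            + pd (fun y => H y b d) c x - pd (fun y => H y b c) d x)
              * cderiv γ b t * cderiv γ c t)) := by
      apply Finset.sum_congr rfl; intro b _
      apply Finset.sum_congr rfl; intro c _
      unfold christoffel
      rw [Finset.mul_sum, Finset.sum_mul, Finset.sum_mul]
      exact Finset.sum_congr rfl fun d _ => by ring
    rw [e1, swap3]
    apply Finset.sum_congr rfl; intro d _
    simp only [Finset.mul_sum]
  -- conclusion
  rw [hchr]
  have hca : cderiv2 γ a t = ∑ d, minv (H x) a d * ∑ b, H x d b * cderiv2 γ b t :=
    (hfin (fun b => cderiv2 γ b t)).symm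
  rw [hca, ← Finset.sum_add_distrib]
  apply Finset.sum_eq_zero
  intro d _
  rw [hmain d]
  ring
end

section
/- Action of the autoparallel equation, non-affine parametrization: Let U ⊆ ℝⁿ be open and H : U → (Fin n → Fin n → ℝ) smooth with H(x) symmetric and invertible for every x. Let γ : I → U be a smooth curve on an open interval I with Σ_{a,b} H_{ab}(γ(λ)) γ'^a(λ) γ'^b(λ) ≠ 0 for all λ ∈ I, and set 𝓛(λ) := √|Σ_{a,b} H_{ab}(γ(λ)) γ'^a(λ) γ'^b(λ)|. If γ satisfies the Euler–Lagrange equations d/dλ [ (1/𝓛) Σ_b H_{ab}(γ) γ'^b ] = (1/(2𝓛)) Σ_{b,c} ∂_a H_{bc}(γ) γ'^b γ'^c for every a and every λ ∈ I, then for all λ ∈ I and all a: γ''^a(λ) + Σ_{b,c} Γ[H]^a_{bc}(γ(λ)) γ'^b(λ) γ'^c(λ) = (𝓛'(λ)/𝓛(λ)) γ'^a(λ). -/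
open scoped BigOperators

lemma fderiv_apply_sum_pd {n : ℕ} (f : (Fin n → ℝ) → ℝ) (x v : Fin n → ℝ) :
    fderiv ℝ f x v = ∑ c, v c * pd f c x := by
  have hv : v = ∑ c, v c • (Pi.single c (1:ℝ) : Fin n → ℝ) := by
    funext j
    simp [Pi.single_apply, Finset.sum_ite_eq, mul_comm]
  nth_rewrite 1 [hv]
  rw [map_sum]
  simp [pd, smul_eq_mul]

lemma pd_congr {n : ℕ} {f g : (Fin n → ℝ) → ℝ} {U : Set (Fin n → ℝ)} (hU : IsOpen U)
    {x : Fin n → ℝ} (hx : x ∈ U) (h : ∀ y ∈ U, f y = g y) (a : Fin n) :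
    pd f a x = pd g a x := by
  have : f =ᶠ[nhds x] g := Filter.eventuallyEq_of_mem (hU.mem_nhds hx) h
  unfold pd
  rw [this.fderiv_eq]

lemma diff_sqrt_abs {y : ℝ} (hy : y ≠ 0) : DifferentiableAt ℝ (fun z => Real.sqrt |z|) y := by
  rcases lt_or_gt_of_ne hy with h | h
  · have he : (fun z : ℝ => Real.sqrt (-z)) =ᶠ[nhds y] (fun z => Real.sqrt |z|) :=
      Filter.eventuallyEq_of_mem (isOpen_Iio.mem_nhds h)
        (fun z (hz : z ∈ Set.Iio 0) => by rw [abs_of_neg hz])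
    refine DifferentiableAt.congr_of_eventuallyEq ?_ he.symm
    exact DifferentiableAt.sqrt (differentiableAt_neg_iff.mpr differentiableAt_id) (by simpa using hy)
  · have he : (fun z : ℝ => Real.sqrt z) =ᶠ[nhds y] (fun z => Real.sqrt |z|) :=
      Filter.eventuallyEq_of_mem (isOpen_Ioi.mem_nhds h)
        (fun z (hz : z ∈ Set.Ioi 0) => by rw [abs_of_pos hz])
    exact DifferentiableAt.congr_of_eventuallyEq
      (DifferentiableAt.sqrt differentiableAt_id hy) he.symm

lemma inv_contract {n : ℕ} (A : Matrix (Fin n) (Fin n) ℝ) (hA : IsUnit A.det)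
    (u : Fin n → ℝ) (e : Fin n) :
    ∑ a, A⁻¹ e a * (∑ b, A a b * u b) = u e := by
  have h := Matrix.nonsing_inv_mul A hA
  calc ∑ a, A⁻¹ e a * (∑ b, A a b * u b)
      = ∑ a, ∑ b, A⁻¹ e a * A a b * u b := by
        simp [Finset.mul_sum, mul_assoc]
    _ = ∑ b, ∑ a, A⁻¹ e a * A a b * u b := Finset.sum_comm
    _ = ∑ b, (∑ a, A⁻¹ e a * A a b) * u b := by
        simp [Finset.sum_mul]
    _ = ∑ b, (A⁻¹ * A) e b * u b := by simp [Matrix.mul_apply]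
    _ = u e := by rw [h]; simp [Matrix.one_apply]

lemma triple_sum_rearrange {n : ℕ} (f : Fin n → Fin n → Fin n → ℝ) :
    ∑ b, ∑ c, ∑ a, f a b c = ∑ a, ∑ b, ∑ c, f a b c := by
  calc ∑ b, ∑ c, ∑ a, f a b c = ∑ b, ∑ a, ∑ c, f a b c :=
        Finset.sum_congr rfl (fun b _ => Finset.sum_comm)
    _ = ∑ a, ∑ b, ∑ c, f a b c := Finset.sum_comm

/-- **Action of the autoparallel equation, non-affine parametrization**: if `γ` satisfies the
Euler–Lagrange equations of `𝓛 = √|H_{ab} γ'^a γ'^b|`, then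
`γ''^a + Γ[H]^a_{bc} γ'^b γ'^c = (𝓛'/𝓛) γ'^a`. -/
theorem autoparallel_from_action_nonaffine {n : ℕ} (U : Set (Fin n → ℝ)) (hU : IsOpen U)
    (H : (Fin n → ℝ) → Fin n → Fin n → ℝ)
    (hH : ContDiffOn ℝ (⊤ : ℕ∞) H U)
    (hHsym : ∀ x ∈ U, ∀ a b, H x a b = H x b a)
    (hHinv : ∀ x ∈ U, IsUnit (Matrix.of (H x)).det)
    (I : Set ℝ) (hI : IsOpen I) (hIconn : IsPreconnected I)
    (γ : ℝ → Fin n → ℝ) (hγ : ContDiffOn ℝ (⊤ : ℕ∞) γ I)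
    (hmaps : ∀ t ∈ I, γ t ∈ U)
    (hne : ∀ t ∈ I, (∑ a, ∑ b, H (γ t) a b * cderiv γ a t * cderiv γ b t) ≠ 0)
    (hEL : ∀ a, ∀ t ∈ I,
      deriv (fun s => (1 / lag H γ s) * ∑ b, H (γ s) a b * cderiv γ b s) t =
        (1 / (2 * lag H γ t)) *
          ∑ b, ∑ c, pd (fun y => H y b c) a (γ t) * cderiv γ b t * cderiv γ c t) :
    ∀ t ∈ I, ∀ a, cderiv2 γ a t
      + ∑ b, ∑ c, christoffel H (γ t) a b c * cderiv γ b t * cderiv γ c t =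
      (deriv (lag H γ) t / lag H γ t) * cderiv γ a t := by
  intro t ht e
  have hxU : γ t ∈ U := hmaps t ht
  set x : Fin n → ℝ := γ t with hxdef
  -- curve differentiability
  have hγt : DifferentiableAt ℝ γ t :=
    (hγ.contDiffAt (hI.mem_nhds ht)).differentiableAt (by simp)
  set v : Fin n → ℝ := deriv γ t with hvdef
  have hγcomp : ∀ b, HasDerivAt (fun s => γ s b) (v b) t := fun b =>
    ((ContinuousLinearMap.proj b : ((Fin n → ℝ) →L[ℝ] ℝ)).hasFDerivAt).comp_hasDerivAt t
      hγt.hasDerivAt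
  have hcv : ∀ b, cderiv γ b t = v b := fun b => (hγcomp b).deriv
  -- components of H are smooth at x
  have hHx : ContDiffAt ℝ (⊤ : ℕ∞) H x := hH.contDiffAt (hU.mem_nhds hxU)
  have hHbc : ∀ b c, DifferentiableAt ℝ (fun y => H y b c) x := fun b c =>
    ((contDiffAt_pi.mp ((contDiffAt_pi.mp hHx) b)) c).differentiableAt (by simp)
  -- chain rule for H ∘ γ
  have hHcurve : ∀ b c, HasDerivAt (fun s => H (γ s) b c)
      (∑ d, v d * pd (fun y => H y b c) d x) t := by
    intro b c
    have h1 := ((hHbc b c).hasFDerivAt).comp_hasDerivAt t hγt.hasDerivAt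
    rwa [fderiv_apply_sum_pd] at h1
  -- second derivatives
  have hcD : ∀ b, HasDerivAt (cderiv γ b) (cderiv2 γ b t) t := by
    intro b
    have hcontb : ContDiffOn ℝ (⊤ : ℕ∞) (fun s => γ s b) I :=
      (ContinuousLinearMap.proj b : ((Fin n → ℝ) →L[ℝ] ℝ)).contDiff.comp_contDiffOn hγ
    have hd : ContDiffOn ℝ (⊤ : ℕ∞) (deriv (fun s => γ s b)) I :=
      hcontb.deriv_of_isOpen hI (by exact_mod_cast le_top)
    exact ((hd.contDiffAt (hI.mem_nhds ht)).differentiableAt (by simp)).hasDerivAt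
  -- quadratic form differentiable, lag differentiable and nonzero
  have hq : DifferentiableAt ℝ
      (fun s => ∑ a, ∑ b, H (γ s) a b * cderiv γ a s * cderiv γ b s) t := by
    apply DifferentiableAt.fun_sum
    intro a _
    apply DifferentiableAt.fun_sum
    intro b _
    exact (((hHcurve a b).differentiableAt.mul (hcD a).differentiableAt).mul
      (hcD b).differentiableAt)
  have hL : DifferentiableAt ℝ (lag H γ) t := by
    have := (diff_sqrt_abs (hne t ht)).comp t hq
    exact this
  have hLne : lag H γ t ≠ 0 := by
    have : (0:ℝ) < |∑ a, ∑ b, H (γ t) a b * cderiv γ a t * cderiv γ b t| :=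
      abs_pos.mpr (hne t ht)
    exact Real.sqrt_ne_zero'.mpr this
  set L : ℝ := lag H γ t with hLdef
  set L' : ℝ := deriv (lag H γ) t with hL'def
  -- abbreviations
  set P : Fin n → ℝ := fun a => ∑ b, H x a b * v b with hP
  set W : Fin n → ℝ := fun a => ∑ b, H x a b * cderiv2 γ b t with hW
  set T : Fin n → ℝ := fun a => ∑ b, ∑ d, pd (fun y => H y a b) d x * v d * v b with hT
  set S : Fin n → ℝ := fun a => ∑ b, ∑ c, pd (fun y => H y b c) a x * v b * v c with hS
  -- derivative of the momentum
  have hpder : ∀ a, HasDerivAt (fun s => ∑ b, H (γ s) a b * cderiv γ b s)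
      (T a + W a) t := by
    intro a
    have h0 : HasDerivAt (fun s => ∑ b, H (γ s) a b * cderiv γ b s)
        (∑ b, ((∑ d, v d * pd (fun y => H y a b) d x) * cderiv γ b t
          + H (γ t) a b * cderiv2 γ b t)) t :=
      HasDerivAt.fun_sum fun b _ => (hHcurve a b).mul (hcD b)
    have he : (∑ b, ((∑ d, v d * pd (fun y => H y a b) d x) * cderiv γ b t
          + H (γ t) a b * cderiv2 γ b t)) = T a + W a := by
      rw [Finset.sum_add_distrib, hT, hW]
      congr 1
      · refine Finset.sum_congr rfl fun b _ => ?_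
        rw [Finset.sum_mul, hcv]
        exact Finset.sum_congr rfl fun d _ => by ring
    rwa [he] at h0
  -- the key pointwise identity from Euler--Lagrange
  have key : ∀ a, W a = L' / L * P a + S a / 2 - T a := by
    intro a
    have hfull : HasDerivAt (fun s => (lag H γ s)⁻¹ * ∑ b, H (γ s) a b * cderiv γ b s)
        (-L' / L ^ 2 * (∑ b, H (γ t) a b * cderiv γ b t) + L⁻¹ * (T a + W a)) t :=
      HasDerivAt.mul (hL.hasDerivAt.inv hLne) (hpder a)
    have hEL' := hEL a t ht
    simp only [one_div] at hEL'
    rw [hfull.deriv] at hEL'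
    have hPa : (∑ b, H (γ t) a b * cderiv γ b t) = P a := by
      rw [hP]
      exact Finset.sum_congr rfl fun b _ => by rw [hcv]
    have hSa : (∑ b, ∑ c, pd (fun y => H y b c) a (γ t) * cderiv γ b t * cderiv γ c t)
        = S a := by
      rw [hS]
      exact Finset.sum_congr rfl fun b _ => Finset.sum_congr rfl fun c _ => by
        rw [hcv, hcv]
    rw [hPa, hSa] at hEL'
    have hE2 : L⁻¹ * (T a + W a) = (2 * L)⁻¹ * S a + L' / L ^ 2 * P a := by
      linear_combination hEL'
    have h1 : T a + W a = L * ((2 * L)⁻¹ * S a + L' / L ^ 2 * P a) := by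
      rw [← hE2, mul_inv_cancel_left₀ hLne]
    have h2 : L * ((2 * L)⁻¹ * S a + L' / L ^ 2 * P a) = S a / 2 + L' / L * P a := by
      field_simp
    rw [h2] at h1
    linarith
  -- symmetry of pd
  have hpdsym : ∀ b c d, pd (fun y => H y b c) d x = pd (fun y => H y c b) d x :=
    fun b c d => pd_congr hU hxU (fun y hy => hHsym y hy b c) d
  -- symmetrization of T
  have claim1 : ∀ a, T a = ∑ b, ∑ c, pd (fun y => H y b a) c x * v b * v c := by
    intro a
    rw [hT]
    refine Finset.sum_congr rfl fun b _ => Finset.sum_congr rfl fun d _ => ?_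
    rw [hpdsym a b d]
    ring
  have claim2 : ∀ a, T a = ∑ b, ∑ c, pd (fun y => H y c a) b x * v b * v c := by
    intro a
    rw [claim1 a, Finset.sum_comm]
    exact Finset.sum_congr rfl fun b _ => Finset.sum_congr rfl fun c _ => by ring
  have hTa : ∀ a, (1/2) * (∑ b, ∑ c,
      (pd (fun y => H y c a) b x + pd (fun y => H y b a) c x
        - pd (fun y => H y b c) a x) * v b * v c) = T a - S a / 2 := by
    intro a
    have hsplit : (∑ b, ∑ c,
        (pd (fun y => H y c a) b x + pd (fun y => H y b a) c x
          - pd (fun y => H y b c) a x) * v b * v c)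
        = (∑ b, ∑ c, pd (fun y => H y c a) b x * v b * v c)
          + (∑ b, ∑ c, pd (fun y => H y b a) c x * v b * v c)
          - (∑ b, ∑ c, pd (fun y => H y b c) a x * v b * v c) := by
      simp only [sub_mul, add_mul, Finset.sum_add_distrib, Finset.sum_sub_distrib]
    rw [hsplit, ← claim1 a, ← claim2 a, hS]
    ring
  -- contraction with the inverse metric
  have hA : IsUnit (Matrix.of (H x)).det := hHinv x hxU
  have hWe : cderiv2 γ e t = ∑ a, minv (H x) e a * W a := by
    have h0 := (inv_contract (Matrix.of (H x)) hA (fun b => cderiv2 γ b t) e).symm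
    simpa [minv, Matrix.of_apply, hW] using h0
  have hVe : v e = ∑ a, minv (H x) e a * P a := by
    have h0 := (inv_contract (Matrix.of (H x)) hA v e).symm
    simpa [minv, Matrix.of_apply, hP] using h0
  -- the Christoffel contraction
  have hG : (∑ b, ∑ c, christoffel H x e b c * v b * v c)
      = ∑ a, minv (H x) e a * (T a - S a / 2) := by
    have h1 : ∀ b c : Fin n, christoffel H x e b c * v b * v c
        = ∑ a, minv (H x) e a * ((1/2) *
            ((pd (fun y => H y c a) b x + pd (fun y => H y b a) c x
              - pd (fun y => H y b c) a x) * v b * v c)) := by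
      intro b c
      simp only [christoffel, Finset.sum_mul, Finset.mul_sum]
      exact Finset.sum_congr rfl fun a _ => by ring
    calc (∑ b, ∑ c, christoffel H x e b c * v b * v c)
        = ∑ b, ∑ c, ∑ a, minv (H x) e a * ((1/2) *
            ((pd (fun y => H y c a) b x + pd (fun y => H y b a) c x
              - pd (fun y => H y b c) a x) * v b * v c)) :=
          Finset.sum_congr rfl fun b _ => Finset.sum_congr rfl fun c _ => h1 b c
      _ = ∑ a, ∑ b, ∑ c, minv (H x) e a * ((1/2) *
            ((pd (fun y => H y c a) b x + pd (fun y => H y b a) c x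
              - pd (fun y => H y b c) a x) * v b * v c)) := triple_sum_rearrange _
      _ = ∑ a, minv (H x) e a * (T a - S a / 2) := by
          refine Finset.sum_congr rfl fun a _ => ?_
          rw [← hTa a]
          simp only [Finset.mul_sum]
  -- assemble
  have hgoalv : ∀ b, cderiv γ b t = v b := hcv
  calc cderiv2 γ e t + ∑ b, ∑ c, christoffel H x e b c * cderiv γ b t * cderiv γ c t
      = cderiv2 γ e t + ∑ b, ∑ c, christoffel H x e b c * v b * v c := by
        congr 1
        exact Finset.sum_congr rfl fun b _ => Finset.sum_congr rfl fun c _ => by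
          rw [hgoalv, hgoalv]
    _ = (∑ a, minv (H x) e a * W a) + ∑ a, minv (H x) e a * (T a - S a / 2) := by
        rw [hWe, hG]
    _ = ∑ a, minv (H x) e a * (W a + (T a - S a / 2)) := by
        rw [← Finset.sum_add_distrib]
        exact Finset.sum_congr rfl fun a _ => by ring
    _ = ∑ a, minv (H x) e a * (L' / L * P a) := by
        refine Finset.sum_congr rfl fun a _ => ?_
        rw [key a]
        ring
    _ = L' / L * ∑ a, minv (H x) e a * P a := by
        rw [Finset.mul_sum]
        exact Finset.sum_congr rfl fun a _ => by ring
    _ = L' / L * v e := by rw [← hVe]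
    _ = L' / L * cderiv γ e t := by rw [hgoalv]
end

section
/- Most general force variational with multiplier g (Proposition 3.1): Let U ⊆ ℝⁿ be open, g : U → (Fin n → Fin n → ℝ) smooth with g(x) symmetric and invertible for every x, and F : U × ℝⁿ → ℝⁿ smooth. Suppose there exists a smooth Lagrangian 𝓛 : U × ℝⁿ → ℝ whose Euler–Lagrange expression matches the system with multiplier g, i.e. for all x ∈ U, v ∈ ℝⁿ, w ∈ ℝⁿ and every index a: Σ_b (∂²𝓛/∂v^a∂v^b)(x,v) w^b + Σ_b (∂²𝓛/∂x^b∂v^a)(x,v) v^b − (∂𝓛/∂x^a)(x,v) = Σ_b g_{ab}(x) (w^b − F^b(x,v)). Then there exist smooth maps P : U → (Fin n → Fin n → ℝ) and S : U → (Fin n → ℝ) such that for all x ∈ U, v ∈ ℝⁿ and every index a: F^a(x,v) = −Σ_{b,c} Γ[g]^a_{bc}(x) v^b v^c + Σ_b P^a_b(x) v^b + S^a(x), where Γ[g]^a_{bc} are the Christoffel symbols of g. -/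
open scoped BigOperators

/-- Partial derivative in the `a`-th position coordinate of the first slot of `U × ℝⁿ`. -/
noncomputable def pdx {n : ℕ} (f : (Fin n → ℝ) × (Fin n → ℝ) → ℝ) (a : Fin n)
    (p : (Fin n → ℝ) × (Fin n → ℝ)) : ℝ :=
  fderiv ℝ f p (Pi.single a 1, 0)

/-- Partial derivative in the `a`-th velocity coordinate of the second slot of `U × ℝⁿ`. -/
noncomputable def pdv {n : ℕ} (f : (Fin n → ℝ) × (Fin n → ℝ) → ℝ) (a : Fin n)
    (p : (Fin n → ℝ) × (Fin n → ℝ)) : ℝ :=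
  fderiv ℝ f p (0, Pi.single a 1)

namespace FVM

variable {n : ℕ}

lemma clm_apply_eq_sum (T : (Fin n → ℝ) →L[ℝ] ℝ) (w : Fin n → ℝ) :
    T w = ∑ b, w b * T (Pi.single b 1) := by
  have hw : w = ∑ b, w b • (Pi.single b 1 : Fin n → ℝ) := by
    funext i
    rw [Finset.sum_apply]
    simp [Pi.single_apply]
  conv_lhs => rw [hw]
  rw [map_sum]
  simp [smul_eq_mul]

lemma sum_mul_single (f : Fin n → ℝ) (c : Fin n) :
    ∑ b, f b * (Pi.single c 1 : Fin n → ℝ) b = f c := by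
  simp [Pi.single_apply]

lemma contDiffOn_fderiv_apply {s : Set ((Fin n → ℝ) × (Fin n → ℝ))}
    (hs : IsOpen s) {L : (Fin n → ℝ) × (Fin n → ℝ) → ℝ}
    (hL : ContDiffOn ℝ (⊤ : ℕ∞) L s) (c : (Fin n → ℝ) × (Fin n → ℝ)) :
    ContDiffOn ℝ (⊤ : ℕ∞) (fun p => fderiv ℝ L p c) s := by
  have h1 : ContDiffOn ℝ (⊤ : ℕ∞) (fun p => fderiv ℝ L p) s :=
    hL.fderiv_of_isOpen hs (by norm_num)
  exact h1.clm_apply contDiffOn_const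

lemma contDiffOn_fderiv_apply' {s : Set (Fin n → ℝ)}
    (hs : IsOpen s) {f : (Fin n → ℝ) → ℝ}
    (hf : ContDiffOn ℝ (⊤ : ℕ∞) f s) (c : Fin n → ℝ) :
    ContDiffOn ℝ (⊤ : ℕ∞) (fun x => fderiv ℝ f x c) s := by
  have h1 : ContDiffOn ℝ (⊤ : ℕ∞) (fun x => fderiv ℝ f x) s :=
    hf.fderiv_of_isOpen hs (by norm_num)
  exact h1.clm_apply contDiffOn_const

/-- If two differentiable functions on ℝⁿ have the same directional derivatives in
coordinate directions, they differ by a constant. -/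
lemma eq_add_of_fderiv_single_eq {φ q : (Fin n → ℝ) → ℝ}
    (hφ : Differentiable ℝ φ) (hq : Differentiable ℝ q) (h0 : q 0 = 0)
    (h : ∀ v c, fderiv ℝ φ v (Pi.single c 1) = fderiv ℝ q v (Pi.single c 1)) :
    ∀ v, φ v = φ 0 + q v := by
  intro v
  have hψ : Differentiable ℝ (fun v => φ v - q v) := hφ.sub hq
  have hz : ∀ v, fderiv ℝ (fun v => φ v - q v) v = 0 := by
    intro v
    have hs : fderiv ℝ (fun v => φ v - q v) v = fderiv ℝ φ v - fderiv ℝ q v :=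
      fderiv_sub (hφ v) (hq v)
    rw [hs]
    ext w
    rw [ContinuousLinearMap.zero_apply, clm_apply_eq_sum]
    apply Finset.sum_eq_zero
    intro b _
    simp [h v b]
  have := is_const_of_fderiv_eq_zero hψ hz v 0
  linarith [this]

lemma hasFDerivAt_quad (M : Fin n → Fin n → ℝ) (v : Fin n → ℝ) :
    HasFDerivAt (fun v : Fin n → ℝ => (1/2) * ∑ b, ∑ c, M b c * v b * v c)
      ((1/2 : ℝ) • ∑ b, ∑ c, ((M b c * v b) • ContinuousLinearMap.proj c
        + v c • (M b c • (ContinuousLinearMap.proj b : (Fin n → ℝ) →L[ℝ] ℝ)))) v := by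
  apply HasFDerivAt.const_mul
  apply HasFDerivAt.fun_sum
  intro b _
  apply HasFDerivAt.fun_sum
  intro c _
  exact ((ContinuousLinearMap.proj b : (Fin n → ℝ) →L[ℝ] ℝ).hasFDerivAt.const_mul
    (M b c)).mul (ContinuousLinearMap.proj c : (Fin n → ℝ) →L[ℝ] ℝ).hasFDerivAt

lemma fderiv_quad_single (M : Fin n → Fin n → ℝ) (hM : ∀ b c, M b c = M c b)
    (v : Fin n → ℝ) (d : Fin n) :
    fderiv ℝ (fun v : Fin n → ℝ => (1/2) * ∑ b, ∑ c, M b c * v b * v c) v (Pi.single d 1)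
      = ∑ c, M d c * v c := by
  rw [(hasFDerivAt_quad M v).fderiv]
  simp only [ContinuousLinearMap.smul_apply, ContinuousLinearMap.sum_apply,
    ContinuousLinearMap.add_apply, ContinuousLinearMap.proj_apply, Pi.single_apply,
    smul_eq_mul, mul_ite, mul_one, mul_zero, Finset.sum_add_distrib,
    Finset.sum_ite_eq', Finset.mem_univ, if_true]
  have h1 : ∑ b, M b d * v b = ∑ b, M d b * v b :=
    Finset.sum_congr rfl (fun b _ => by rw [hM])
  rw [h1]
  have h2 : ∑ x : Fin n, ∑ x1 : Fin n, (if x = d then v x1 * M x x1 else 0)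
      = ∑ x1, M d x1 * v x1 := by
    rw [Finset.sum_comm]
    simp [mul_comm]
  rw [h2]
  ring

section slices
variable {E' : Type*} [NormedAddCommGroup E'] [NormedSpace ℝ E']

lemma diffAt_of_contDiffOn {s : Set E'} {f : E' → ℝ} (hs : IsOpen s)
    (hf : ContDiffOn ℝ (⊤ : ℕ∞) f s) {p : E'} (hp : p ∈ s) :
    DifferentiableAt ℝ f p :=
  ((hf p hp).differentiableWithinAt (by norm_num)).differentiableAt (hs.mem_nhds hp)

lemma schwarz {s : Set E'} (hs : IsOpen s) {L : E' → ℝ}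
    (hL : ContDiffOn ℝ (⊤ : ℕ∞) L s) {p : E'} (hp : p ∈ s) (u w : E') :
    fderiv ℝ (fun q => fderiv ℝ L q u) p w = fderiv ℝ (fun q => fderiv ℝ L q w) p u := by
  have hCA : ContDiffAt ℝ (⊤ : ℕ∞) L p := hL.contDiffAt (hs.mem_nhds hp)
  have hdf : DifferentiableAt ℝ (fderiv ℝ L) p :=
    (hCA.fderiv_right (m := (⊤ : ℕ∞)) (by norm_num)).differentiableAt (by norm_num)
  have hsym : ∀ v w, fderiv ℝ (fderiv ℝ L) p v w = fderiv ℝ (fderiv ℝ L) p w v :=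
    hCA.isSymmSndFDerivAt (by
      rw [minSmoothness_of_isRCLikeNormedField]
      rw [show (2 : WithTop ℕ∞) = ((2:ℕ∞) : WithTop ℕ∞) from rfl]
      exact WithTop.coe_le_coe.2 (le_top (a := (2:ℕ∞))))
  have e : ∀ u : E', fderiv ℝ (fun q => fderiv ℝ L q u) p
      = (fderiv ℝ (fderiv ℝ L) p).flip u := by
    intro u
    rw [fderiv_clm_apply hdf (differentiableAt_const u)]
    simp
  rw [e u, e w]
  simp only [ContinuousLinearMap.flip_apply]
  exact hsym w u

end slices

lemma slice_hasFDerivAt {f : (Fin n → ℝ) × (Fin n → ℝ) → ℝ} {x v : Fin n → ℝ}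
    (hf : DifferentiableAt ℝ f (x, v)) :
    HasFDerivAt (fun v => f (x, v))
      ((fderiv ℝ f (x, v)).comp (ContinuousLinearMap.inr ℝ _ _)) v :=
  hf.hasFDerivAt.comp v (hasFDerivAt_prodMk_right x v)

lemma hasFDerivAt_linear (κ : Fin n → ℝ) (v : Fin n → ℝ) :
    HasFDerivAt (fun v : Fin n → ℝ => ∑ b, κ b * v b)
      (∑ b, κ b • (ContinuousLinearMap.proj b : (Fin n → ℝ) →L[ℝ] ℝ)) v := by
  apply HasFDerivAt.fun_sum
  intro b _
  exact (ContinuousLinearMap.proj b : (Fin n → ℝ) →L[ℝ] ℝ).hasFDerivAt.const_mul (κ b)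

lemma linear_single (κ : Fin n → ℝ) (d : Fin n) :
    (∑ b, κ b • (ContinuousLinearMap.proj b : (Fin n → ℝ) →L[ℝ] ℝ)) (Pi.single d 1)
      = κ d := by
  simp [ContinuousLinearMap.sum_apply, Pi.single_apply]

lemma contDiffOn_finset_prod {ι : Type*} [DecidableEq ι] {s : Set (Fin n → ℝ)} (t : Finset ι)
    (f : ι → (Fin n → ℝ) → ℝ) (h : ∀ i ∈ t, ContDiffOn ℝ (⊤ : ℕ∞) (f i) s) :
    ContDiffOn ℝ (⊤ : ℕ∞) (fun x => ∏ i ∈ t, f i x) s := by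
  induction t using Finset.induction with
  | empty => simpa using contDiffOn_const
  | @insert i t hni ih =>
    simp only [Finset.prod_insert hni]
    exact (h i (Finset.mem_insert_self i t)).mul
      (ih fun j hj => h j (Finset.mem_insert_of_mem hj))

lemma contDiffOn_det {s : Set (Fin n → ℝ)} {M : (Fin n → ℝ) → Matrix (Fin n) (Fin n) ℝ}
    (h : ∀ i j, ContDiffOn ℝ (⊤ : ℕ∞) (fun x => M x i j) s) :
    ContDiffOn ℝ (⊤ : ℕ∞) (fun x => (M x).det) s := by
  simp only [Matrix.det_apply']
  apply ContDiffOn.sum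
  intro σ _
  exact contDiffOn_const.mul (contDiffOn_finset_prod _ _ (fun i _ => h (σ i) i))

lemma contDiffOn_minv {s : Set (Fin n → ℝ)} {g : (Fin n → ℝ) → Fin n → Fin n → ℝ}
    (hg : ∀ i j, ContDiffOn ℝ (⊤ : ℕ∞) (fun x => g x i j) s)
    (hdet : ∀ x ∈ s, (Matrix.of (g x)).det ≠ 0) (a d : Fin n) :
    ContDiffOn ℝ (⊤ : ℕ∞) (fun x => minv (g x) a d) s := by
  have hrw : ∀ x, minv (g x) a d
      = ((Matrix.of (g x)).det)⁻¹ * (Matrix.of (g x)).adjugate a d := by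
    intro x
    rw [minv, Matrix.inv_def]
    simp [Ring.inverse_eq_inv', Matrix.smul_apply, smul_eq_mul]
  simp only [hrw]
  have hdetCD : ContDiffOn ℝ (⊤ : ℕ∞) (fun x => (Matrix.of (g x)).det) s :=
    contDiffOn_det (fun i j => hg i j)
  refine (hdetCD.inv hdet).mul ?_
  simp only [Matrix.adjugate_apply]
  apply contDiffOn_det
  intro i j
  by_cases hi : i = d
  · simp only [Matrix.updateRow_apply, hi, if_true]
    exact contDiffOn_const
  · simp only [Matrix.updateRow_apply, hi, if_false]
    exact hg i j

lemma swap_quad (X : Fin n → Fin n → ℝ) (v : Fin n → ℝ) :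
    ∑ b, ∑ c, X b c * v b * v c = ∑ b, ∑ c, X c b * v b * v c := by
  rw [Finset.sum_comm]
  exact Finset.sum_congr rfl fun b _ => Finset.sum_congr rfl fun c _ => by ring

lemma mul_sum_comm (A : Fin n → ℝ) (f : Fin n → Fin n → ℝ) :
    ∑ d, A d * ∑ b, f d b = ∑ b, ∑ d, A d * f d b := by
  simp only [Finset.mul_sum]
  exact Finset.sum_comm

lemma mul_sum_comm2 (A : Fin n → ℝ) (f : Fin n → Fin n → Fin n → ℝ) :
    ∑ d, A d * ∑ b, ∑ c, f d b c = ∑ b, ∑ c, ∑ d, A d * f d b c := by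
  rw [mul_sum_comm A (fun d b => ∑ c, f d b c)]
  exact Finset.sum_congr rfl fun b _ => mul_sum_comm A (fun d c => f d b c)

lemma quad_coeff_congr (X Y : Fin n → Fin n → ℝ) (v : Fin n → ℝ)
    (h : ∀ b c, X b c + X c b = Y b c + Y c b) :
    ∑ b, ∑ c, X b c * v b * v c = ∑ b, ∑ c, Y b c * v b * v c := by
  have e : ∀ Z : Fin n → Fin n → ℝ, ∑ b, ∑ c, (Z b c + Z c b) * v b * v c
      = ∑ b, ∑ c, Z b c * v b * v c + ∑ b, ∑ c, Z c b * v b * v c := by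
    intro Z
    simp only [add_mul, Finset.sum_add_distrib]
  have h2 : ∑ b, ∑ c, (X b c + X c b) * v b * v c
      = ∑ b, ∑ c, (Y b c + Y c b) * v b * v c :=
    Finset.sum_congr rfl fun b _ => Finset.sum_congr rfl fun c _ => by rw [h b c]
  rw [e X, e Y, ← swap_quad X v, ← swap_quad Y v] at h2
  linarith

lemma main_algebra (G B : Fin n → ℝ) (DA : Fin n → Fin n → ℝ)
    (DG : Fin n → Fin n → Fin n → ℝ) (hDG : ∀ e b c, DG e b c = DG e c b)
    (v : Fin n → ℝ) :
    ∑ d, G d * (B d + ∑ b, DA b d * v b + (1/2) * ∑ b, ∑ c, DG d b c * v b * v c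
        - ∑ b, (DA d b + ∑ c, DG b d c * v c) * v b)
    = -(∑ b, ∑ c, ((1/2) * ∑ d, G d * (DG b c d + DG c b d - DG d b c)) * v b * v c)
      + ∑ b, (∑ d, G d * (DA b d - DA d b)) * v b + ∑ d, G d * B d := by
  have expand : ∀ d, G d * (B d + ∑ b, DA b d * v b + (1/2) * ∑ b, ∑ c, DG d b c * v b * v c
        - ∑ b, (DA d b + ∑ c, DG b d c * v c) * v b)
      = G d * B d + G d * ∑ b, (DA b d - DA d b) * v b
        + G d * ∑ b, ∑ c, ((1/2) * DG d b c - DG b c d) * v b * v c := by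
    intro d
    have e3 : ∑ b, (DA d b + ∑ c, DG b d c * v c) * v b
        = ∑ b, DA d b * v b + ∑ b, ∑ c, DG b d c * v c * v b := by
      rw [← Finset.sum_add_distrib]
      exact Finset.sum_congr rfl fun b _ => by rw [add_mul, Finset.sum_mul]
    have e1 : ∑ b, (DA b d - DA d b) * v b = ∑ b, DA b d * v b - ∑ b, DA d b * v b := by
      rw [← Finset.sum_sub_distrib]
      exact Finset.sum_congr rfl fun b _ => by ring
    have e2 : ∑ b, ∑ c, ((1/2) * DG d b c - DG b c d) * v b * v c
        = (1/2) * (∑ b, ∑ c, DG d b c * v b * v c) - ∑ b, ∑ c, DG b c d * v b * v c := by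
      rw [Finset.mul_sum, ← Finset.sum_sub_distrib]
      refine Finset.sum_congr rfl fun b _ => ?_
      rw [Finset.mul_sum, ← Finset.sum_sub_distrib]
      exact Finset.sum_congr rfl fun c _ => by ring
    have e4 : ∑ b, ∑ c, DG b d c * v c * v b = ∑ b, ∑ c, DG b c d * v b * v c :=
      Finset.sum_congr rfl fun b _ => Finset.sum_congr rfl fun c _ => by
        rw [hDG b d c]; ring
    rw [e3, e1, e2, e4]
    ring
  rw [Finset.sum_congr rfl fun d _ => expand d]
  rw [Finset.sum_add_distrib, Finset.sum_add_distrib]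
  rw [mul_sum_comm G (fun d b => (DA b d - DA d b) * v b)]
  rw [mul_sum_comm2 G (fun d b c => ((1/2) * DG d b c - DG b c d) * v b * v c)]
  have lin : ∀ b, ∑ d, G d * ((DA b d - DA d b) * v b)
      = (∑ d, G d * (DA b d - DA d b)) * v b := by
    intro b
    rw [Finset.sum_mul]
    exact Finset.sum_congr rfl fun d _ => by ring
  have quadform : ∀ b c, ∑ d, G d * (((1/2) * DG d b c - DG b c d) * v b * v c)
      = (∑ d, G d * ((1/2) * DG d b c - DG b c d)) * v b * v c := by
    intro b c
    rw [Finset.sum_mul, Finset.sum_mul]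
    exact Finset.sum_congr rfl fun d _ => by ring
  rw [Finset.sum_congr rfl fun b _ => lin b]
  rw [Finset.sum_congr rfl fun b _ =>
    Finset.sum_congr rfl fun c _ => quadform b c]
  have quad : ∑ b, ∑ c, (∑ d, G d * ((1/2) * DG d b c - DG b c d)) * v b * v c
      = -(∑ b, ∑ c, ((1/2) * ∑ d, G d * (DG b c d + DG c b d - DG d b c)) * v b * v c) := by
    rw [show -(∑ b, ∑ c, ((1/2) * ∑ d, G d * (DG b c d + DG c b d - DG d b c)) * v b * v c)
        = ∑ b, ∑ c, (-((1/2) * ∑ d, G d * (DG b c d + DG c b d - DG d b c))) * v b * v c by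
      rw [← Finset.sum_neg_distrib]
      exact Finset.sum_congr rfl fun b _ => by
        rw [← Finset.sum_neg_distrib]
        exact Finset.sum_congr rfl fun c _ => by ring]
    apply quad_coeff_congr
    intro b c
    rw [Finset.mul_sum, Finset.mul_sum, ← Finset.sum_neg_distrib, ← Finset.sum_neg_distrib,
      ← Finset.sum_add_distrib, ← Finset.sum_add_distrib]
    refine Finset.sum_congr rfl fun d _ => ?_
    rw [hDG b c d, hDG c b d, hDG d c b]
    ring
  rw [quad]
  ring

end FVM

/-- **Most general force variational with multiplier `g`** (Proposition 3.1): if the system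
`g_{ab}(ẍ^b − F^b)` is the Euler–Lagrange expression of some smooth Lagrangian, then
`F^a = −Γ[g]^a_{bc} v^b v^c + P^a_b v^b + S^a`. -/
theorem force_variational_multiplier_g {n : ℕ} (U : Set (Fin n → ℝ)) (hU : IsOpen U)
    (g : (Fin n → ℝ) → Fin n → Fin n → ℝ)
    (hg : ContDiffOn ℝ (⊤ : ℕ∞) g U)
    (hgsym : ∀ x ∈ U, ∀ a b, g x a b = g x b a)
    (hginv : ∀ x ∈ U, IsUnit (Matrix.of (g x)).det)
    (F : (Fin n → ℝ) → (Fin n → ℝ) → Fin n → ℝ)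
    (hF : ContDiffOn ℝ (⊤ : ℕ∞) (fun p : (Fin n → ℝ) × (Fin n → ℝ) => F p.1 p.2)
      (U ×ˢ (Set.univ : Set (Fin n → ℝ))))
    (L : (Fin n → ℝ) × (Fin n → ℝ) → ℝ)
    (hL : ContDiffOn ℝ (⊤ : ℕ∞) L (U ×ˢ (Set.univ : Set (Fin n → ℝ))))
    (hEL : ∀ x ∈ U, ∀ v w : Fin n → ℝ, ∀ a,
      ∑ b, pdv (pdv L a) b (x, v) * w b + ∑ b, pdx (pdv L a) b (x, v) * v b
        - pdx L a (x, v) =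
      ∑ b, g x a b * (w b - F x v b)) :
    ∃ P : (Fin n → ℝ) → Fin n → Fin n → ℝ, ∃ S : (Fin n → ℝ) → Fin n → ℝ,
      ContDiffOn ℝ (⊤ : ℕ∞) P U ∧ ContDiffOn ℝ (⊤ : ℕ∞) S U ∧
      ∀ x ∈ U, ∀ v : Fin n → ℝ, ∀ a,
        F x v a = - (∑ b, ∑ c, christoffel g x a b c * v b * v c)
          + ∑ b, P x a b * v b + S x a := by
  classical
  have hso : IsOpen (U ×ˢ (Set.univ : Set (Fin n → ℝ))) := hU.prod isOpen_univ
  have hmem : ∀ (x v : Fin n → ℝ), x ∈ U → (x, v) ∈ U ×ˢ (Set.univ : Set (Fin n → ℝ)) :=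
    fun x v hx => ⟨hx, trivial⟩
  have hgc : ∀ i j, ContDiffOn ℝ (⊤ : ℕ∞) (fun y => g y i j) U := fun i j =>
    contDiffOn_pi.1 (contDiffOn_pi.1 hg i) j
  have hLvC : ∀ a, ContDiffOn ℝ (⊤ : ℕ∞) (pdv L a) (U ×ˢ (Set.univ : Set (Fin n → ℝ))) :=
    fun a => FVM.contDiffOn_fderiv_apply hso hL (0, Pi.single a 1)
  have hLxC : ∀ a, ContDiffOn ℝ (⊤ : ℕ∞) (pdx L a) (U ×ˢ (Set.univ : Set (Fin n → ℝ))) :=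
    fun a => FVM.contDiffOn_fderiv_apply hso hL (Pi.single a 1, 0)
  have hsub : U ⊆ (fun y : Fin n → ℝ => (y, (0 : Fin n → ℝ))) ⁻¹'
      (U ×ˢ (Set.univ : Set (Fin n → ℝ))) := fun y hy => ⟨hy, trivial⟩
  have hAC : ∀ b, ContDiffOn ℝ (⊤ : ℕ∞) (fun y => pdv L b (y, 0)) U := fun b =>
    (hLvC b).comp (contDiffOn_id.prodMk contDiffOn_const) hsub
  have hBC : ∀ d, ContDiffOn ℝ (⊤ : ℕ∞) (fun y => pdx L d (y, 0)) U := fun d =>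
    (hLxC d).comp (contDiffOn_id.prodMk contDiffOn_const) hsub
  -- Step B: second v-derivatives of L equal g
  have hvv : ∀ x ∈ U, ∀ (v : Fin n → ℝ) (a c : Fin n),
      pdv (pdv L a) c (x, v) = g x a c := by
    intro x hx v a c
    have h1 := hEL x hx v (Pi.single c 1) a
    have h2 := hEL x hx v 0 a
    simp only [mul_sub, Finset.sum_sub_distrib] at h1 h2
    simp only [Pi.zero_apply, mul_zero, Finset.sum_const_zero, zero_add, zero_sub] at h2
    have key : ∑ b, pdv (pdv L a) b (x, v) * (Pi.single c 1 : Fin n → ℝ) b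
        = ∑ b, g x a b * (Pi.single c 1 : Fin n → ℝ) b := by linarith
    rw [FVM.sum_mul_single, FVM.sum_mul_single] at key
    exact key
  -- Step C: ∂L/∂vᵃ is affine in v
  have hC : ∀ x ∈ U, ∀ (a : Fin n) (v : Fin n → ℝ),
      pdv L a (x, v) = pdv L a (x, 0) + ∑ b, g x a b * v b := by
    intro x hx a v
    have hφd : ∀ v : Fin n → ℝ, HasFDerivAt (fun v => pdv L a (x, v))
        ((fderiv ℝ (pdv L a) (x, v)).comp
          (ContinuousLinearMap.inr ℝ (Fin n → ℝ) (Fin n → ℝ))) v :=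
      fun v => FVM.slice_hasFDerivAt
        (FVM.diffAt_of_contDiffOn hso (hLvC a) (hmem x v hx))
    have hqd : ∀ v : Fin n → ℝ, HasFDerivAt (fun v : Fin n → ℝ => ∑ b, g x a b * v b)
        (∑ b, g x a b • (ContinuousLinearMap.proj b : (Fin n → ℝ) →L[ℝ] ℝ)) v :=
      FVM.hasFDerivAt_linear _
    have hcond : ∀ (v : Fin n → ℝ) (c : Fin n),
        fderiv ℝ (fun v => pdv L a (x, v)) v (Pi.single c 1)
          = fderiv ℝ (fun v : Fin n → ℝ => ∑ b, g x a b * v b) v (Pi.single c 1) := by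
      intro v c
      rw [(hφd v).fderiv, (hqd v).fderiv, FVM.linear_single]
      have e0 : ((fderiv ℝ (pdv L a) (x, v)).comp
          (ContinuousLinearMap.inr ℝ (Fin n → ℝ) (Fin n → ℝ))) (Pi.single c 1)
          = pdv (pdv L a) c (x, v) := rfl
      rw [e0, hvv x hx v a c]
    exact FVM.eq_add_of_fderiv_single_eq (fun v => (hφd v).differentiableAt)
      (fun v => (hqd v).differentiableAt) (by simp) hcond v
  -- Step E: mixed derivative formula
  have hE : ∀ x ∈ U, ∀ (v : Fin n → ℝ) (a b : Fin n),
      pdx (pdv L a) b (x, v)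
        = fderiv ℝ (fun y => pdv L a (y, 0)) x (Pi.single b 1)
          + ∑ c, fderiv ℝ (fun y => g y a c) x (Pi.single b 1) * v c := by
    intro x hx v a b
    have hEq : pdv L a =ᶠ[nhds (x, v)]
        fun p => pdv L a (p.1, 0) + ∑ c, g p.1 a c * p.2 c := by
      filter_upwards [hso.mem_nhds (hmem x v hx)] with p hp
      have := hC p.1 hp.1 a p.2
      simpa using this
    have hAd : HasFDerivAt (fun p : (Fin n → ℝ) × (Fin n → ℝ) => pdv L a (p.1, 0))
        ((fderiv ℝ (fun y => pdv L a (y, 0)) x).comp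
          (ContinuousLinearMap.fst ℝ (Fin n → ℝ) (Fin n → ℝ))) (x, v) :=
      ((FVM.diffAt_of_contDiffOn hU (hAC a) hx).hasFDerivAt).comp (x, v) hasFDerivAt_fst
        (g := fun y => pdv L a (y, 0))
    have hsum : HasFDerivAt
        (fun p : (Fin n → ℝ) × (Fin n → ℝ) => ∑ c, g p.1 a c * p.2 c)
        (∑ c, (g x a c • ((ContinuousLinearMap.proj c).comp
            (ContinuousLinearMap.snd ℝ (Fin n → ℝ) (Fin n → ℝ)))
          + v c • ((fderiv ℝ (fun y => g y a c) x).comp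
            (ContinuousLinearMap.fst ℝ (Fin n → ℝ) (Fin n → ℝ))))) (x, v) := by
      apply HasFDerivAt.fun_sum
      intro c _
      have h1 : HasFDerivAt (fun p : (Fin n → ℝ) × (Fin n → ℝ) => g p.1 a c)
          ((fderiv ℝ (fun y => g y a c) x).comp
            (ContinuousLinearMap.fst ℝ (Fin n → ℝ) (Fin n → ℝ))) (x, v) :=
        ((FVM.diffAt_of_contDiffOn hU (hgc a c) hx).hasFDerivAt).comp (x, v)
          hasFDerivAt_fst (g := fun y => g y a c)
      have h2 : HasFDerivAt (fun p : (Fin n → ℝ) × (Fin n → ℝ) => p.2 c)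
          ((ContinuousLinearMap.proj c).comp
            (ContinuousLinearMap.snd ℝ (Fin n → ℝ) (Fin n → ℝ))) (x, v) :=
        ((ContinuousLinearMap.proj c : (Fin n → ℝ) →L[ℝ] ℝ).hasFDerivAt).comp (x, v)
          hasFDerivAt_snd
      exact h1.mul h2
    have htot := hAd.fun_add hsum
    have e0 : pdx (pdv L a) b (x, v)
        = fderiv ℝ (pdv L a) (x, v) (Pi.single b 1, 0) := rfl
    rw [e0, hEq.fderiv_eq, htot.fderiv]
    simp only [ContinuousLinearMap.add_apply, ContinuousLinearMap.coe_comp',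
      Function.comp_apply, ContinuousLinearMap.coe_fst', ContinuousLinearMap.coe_snd',
      ContinuousLinearMap.sum_apply, ContinuousLinearMap.smul_apply,
      ContinuousLinearMap.proj_apply, smul_eq_mul]
    congr 1
    refine Finset.sum_congr rfl fun c _ => ?_
    simp [mul_comm]
  -- Schwarz symmetry
  have hSch : ∀ x ∈ U, ∀ (v : Fin n → ℝ) (a d : Fin n),
      pdv (pdx L a) d (x, v) = pdx (pdv L d) a (x, v) := by
    intro x hx v a d
    exact FVM.schwarz hso hL (hmem x v hx) (Pi.single a 1, 0) (0, Pi.single d 1)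
  -- Step G: ∂L/∂xᵃ is quadratic in v
  have hG : ∀ x ∈ U, ∀ (a : Fin n) (v : Fin n → ℝ),
      pdx L a (x, v) = pdx L a (x, 0)
        + ∑ b, fderiv ℝ (fun y => pdv L b (y, 0)) x (Pi.single a 1) * v b
        + (1/2) * ∑ b, ∑ c, fderiv ℝ (fun y => g y b c) x (Pi.single a 1) * v b * v c := by
    intro x hx a v
    have hMsym : ∀ b c : Fin n,
        (fun b c => fderiv ℝ (fun y => g y b c) x (Pi.single a 1)) b c
          = (fun b c => fderiv ℝ (fun y => g y b c) x (Pi.single a 1)) c b := by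
      intro b c
      have hev : (fun y => g y b c) =ᶠ[nhds x] fun y => g y c b := by
        filter_upwards [hU.mem_nhds hx] with y hy
        exact hgsym y hy b c
      simp only
      rw [hev.fderiv_eq]
    have hφd : ∀ v : Fin n → ℝ, HasFDerivAt (fun v => pdx L a (x, v))
        ((fderiv ℝ (pdx L a) (x, v)).comp
          (ContinuousLinearMap.inr ℝ (Fin n → ℝ) (Fin n → ℝ))) v :=
      fun v => FVM.slice_hasFDerivAt
        (FVM.diffAt_of_contDiffOn hso (hLxC a) (hmem x v hx))
    have hlind := FVM.hasFDerivAt_linear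
      (fun b => fderiv ℝ (fun y => pdv L b (y, 0)) x (Pi.single a 1))
    have hquadd := FVM.hasFDerivAt_quad
      (fun b c => fderiv ℝ (fun y => g y b c) x (Pi.single a 1))
    have hqdiff : Differentiable ℝ (fun v : Fin n → ℝ =>
        (∑ b, fderiv ℝ (fun y => pdv L b (y, 0)) x (Pi.single a 1) * v b)
        + (1/2) * ∑ b, ∑ c, fderiv ℝ (fun y => g y b c) x (Pi.single a 1) * v b * v c) :=
      fun v => ((hlind v).add (hquadd v)).differentiableAt
    have hcond : ∀ (v : Fin n → ℝ) (d : Fin n),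
        fderiv ℝ (fun v => pdx L a (x, v)) v (Pi.single d 1)
          = fderiv ℝ (fun v : Fin n → ℝ =>
              (∑ b, fderiv ℝ (fun y => pdv L b (y, 0)) x (Pi.single a 1) * v b)
              + (1/2) * ∑ b, ∑ c, fderiv ℝ (fun y => g y b c) x (Pi.single a 1) * v b * v c)
            v (Pi.single d 1) := by
      intro v d
      rw [(hφd v).fderiv, ((hlind v).fun_add (hquadd v)).fderiv]
      rw [ContinuousLinearMap.add_apply, FVM.linear_single]
      have hqs := FVM.fderiv_quad_single
        (fun b c => fderiv ℝ (fun y => g y b c) x (Pi.single a 1)) hMsym v d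
      rw [(hquadd v).fderiv] at hqs
      rw [hqs]
      have e0 : ((fderiv ℝ (pdx L a) (x, v)).comp
          (ContinuousLinearMap.inr ℝ (Fin n → ℝ) (Fin n → ℝ))) (Pi.single d 1)
          = pdv (pdx L a) d (x, v) := rfl
      rw [e0, hSch x hx v a d, hE x hx v d a]
    have := FVM.eq_add_of_fderiv_single_eq (fun v => (hφd v).differentiableAt) hqdiff
      (by simp) hcond v
    rw [this]
    ring
  -- inverse matrix relation
  refine ⟨fun x a b => ∑ d, minv (g x) a d *
      (fderiv ℝ (fun y => pdv L b (y, 0)) x (Pi.single d 1)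
        - fderiv ℝ (fun y => pdv L d (y, 0)) x (Pi.single b 1)),
    fun x a => ∑ d, minv (g x) a d * pdx L d (x, 0), ?_, ?_, ?_⟩
  · -- smoothness of P
    rw [contDiffOn_pi]
    intro a
    rw [contDiffOn_pi]
    intro b
    apply ContDiffOn.sum
    intro d _
    exact (FVM.contDiffOn_minv hgc (fun x hx => (hginv x hx).ne_zero) a d).mul
      ((FVM.contDiffOn_fderiv_apply' hU (hAC b) (Pi.single d 1)).sub
        (FVM.contDiffOn_fderiv_apply' hU (hAC d) (Pi.single b 1)))
  · -- smoothness of S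
    rw [contDiffOn_pi]
    intro a
    apply ContDiffOn.sum
    intro d _
    exact (FVM.contDiffOn_minv hgc (fun x hx => (hginv x hx).ne_zero) a d).mul (hBC d)
  · -- the identity
    intro x hx v a
    have hinvmul : ∀ e b : Fin n, ∑ d, minv (g x) e d * g x d b
        = if e = b then 1 else 0 := by
      intro e b
      have h1 : ((Matrix.of (g x))⁻¹ * Matrix.of (g x)) e b
          = (1 : Matrix (Fin n) (Fin n) ℝ) e b := by
        rw [Matrix.nonsing_inv_mul (Matrix.of (g x)) (hginv x hx)]
      rw [Matrix.mul_apply, Matrix.one_apply] at h1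
      exact h1
    have hFexp : F x v a = ∑ d, minv (g x) a d * (∑ b, g x d b * F x v b) := by
      have h1 : ∑ d, minv (g x) a d * (∑ b, g x d b * F x v b)
          = ∑ b, (∑ d, minv (g x) a d * g x d b) * F x v b := by
        rw [FVM.mul_sum_comm (fun d => minv (g x) a d)
          (fun d b => g x d b * F x v b)]
        exact Finset.sum_congr rfl fun b _ => by
          rw [Finset.sum_mul]
          exact Finset.sum_congr rfl fun d _ => by ring
      rw [h1]
      rw [Finset.sum_congr rfl fun b _ => by rw [hinvmul a b]]
      simp [ite_mul, one_mul, zero_mul, Finset.sum_ite_eq, Finset.mem_univ]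
    have hELd : ∀ d, ∑ b, g x d b * F x v b
        = pdx L d (x, v) - ∑ b, pdx (pdv L d) b (x, v) * v b := by
      intro d
      have h2 := hEL x hx v 0 d
      simp only [Pi.zero_apply, mul_zero, Finset.sum_const_zero, zero_add, zero_sub,
        mul_sub, mul_neg, Finset.sum_neg_distrib, Finset.sum_sub_distrib] at h2
      linarith
    have hperd : ∀ d, ∑ b, g x d b * F x v b
        = pdx L d (x, 0)
          + ∑ b, fderiv ℝ (fun y => pdv L b (y, 0)) x (Pi.single d 1) * v b
          + (1/2) * ∑ b, ∑ c, fderiv ℝ (fun y => g y b c) x (Pi.single d 1) * v b * v c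
          - ∑ b, (fderiv ℝ (fun y => pdv L d (y, 0)) x (Pi.single b 1)
            + ∑ c, fderiv ℝ (fun y => g y d c) x (Pi.single b 1) * v c) * v b := by
      intro d
      have hrw : (∑ b, pdx (pdv L d) b (x, v) * v b)
          = ∑ b, (fderiv ℝ (fun y => pdv L d (y, 0)) x (Pi.single b 1)
            + ∑ c, fderiv ℝ (fun y => g y d c) x (Pi.single b 1) * v c) * v b :=
        Finset.sum_congr rfl fun b _ => by rw [hE x hx v d b]
      rw [hELd d, hG x hx d v, hrw]
    have hDGsym : ∀ e b c : Fin n,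
        (fun e b c => fderiv ℝ (fun y => g y b c) x (Pi.single e 1)) e b c
          = (fun e b c => fderiv ℝ (fun y => g y b c) x (Pi.single e 1)) e c b := by
      intro e b c
      have hev : (fun y => g y b c) =ᶠ[nhds x] fun y => g y c b := by
        filter_upwards [hU.mem_nhds hx] with y hy
        exact hgsym y hy b c
      simp only
      rw [hev.fderiv_eq]
    have halg := FVM.main_algebra (fun d => minv (g x) a d)
      (fun d => pdx L d (x, 0))
      (fun b e => fderiv ℝ (fun y => pdv L b (y, 0)) x (Pi.single e 1))
      (fun e b c => fderiv ℝ (fun y => g y b c) x (Pi.single e 1)) hDGsym v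
    have hsum2 : ∑ d, minv (g x) a d * (∑ b, g x d b * F x v b)
        = ∑ d, minv (g x) a d * (pdx L d (x, 0)
          + ∑ b, fderiv ℝ (fun y => pdv L b (y, 0)) x (Pi.single d 1) * v b
          + (1/2) * ∑ b, ∑ c, fderiv ℝ (fun y => g y b c) x (Pi.single d 1) * v b * v c
          - ∑ b, (fderiv ℝ (fun y => pdv L d (y, 0)) x (Pi.single b 1)
            + ∑ c, fderiv ℝ (fun y => g y d c) x (Pi.single b 1) * v c) * v b) :=
      Finset.sum_congr rfl fun d _ => by rw [← hperd d]
    rw [hFexp, hsum2, halg]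
    simp only [christoffel, pd, minv]
end

section
/- Most general force variational with multiplier e^{−ω} g (Proposition 3.2): Let U ⊆ ℝⁿ be open, g : U → (Fin n → Fin n → ℝ) smooth with g(x) symmetric and invertible for every x, ω : U → ℝ smooth, and F : U × ℝⁿ → ℝⁿ smooth. Suppose there exists a smooth Lagrangian 𝓛 : U × ℝⁿ → ℝ whose Euler–Lagrange expression matches the system with multiplier H_{ab} := e^{−ω} g_{ab}, i.e. for all x ∈ U, v ∈ ℝⁿ, w ∈ ℝⁿ and every index a: Σ_b (∂²𝓛/∂v^a∂v^b)(x,v) w^b + Σ_b (∂²𝓛/∂x^b∂v^a)(x,v) v^b − (∂𝓛/∂x^a)(x,v) = Σ_b e^{−ω(x)} g_{ab}(x) (w^b − F^b(x,v)). Then there exist smooth maps P : U → (Fin n → Fin n → ℝ) and S : U → (Fin n → ℝ) such that for all x ∈ U, v ∈ ℝⁿ and every index a: F^a(x,v) = −Σ_{b,c} (Γ[g]^a_{bc}(x) + L^a_{bc}(x)) v^b v^c + Σ_b P^a_b(x) v^b + S^a(x), where L^a_{bc} := ½ Σ_d g⁻¹^{ad} ∂_d ω g_{bc} − ½ (∂_b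 ω δ^a_c + ∂_c ω δ^a_b) is the disformation tensor of the Weyl non-metricity Q_{abc} = ∂_a ω g_{bc}. -/
open scoped BigOperators

lemma fderiv_apply_contDiffOn {E : Type*} [NormedAddCommGroup E] [NormedSpace ℝ E]
    {f : E → ℝ} {s : Set E} (hf : ContDiffOn ℝ (⊤ : ℕ∞) f s) (hs : IsOpen s) (v : E) :
    ContDiffOn ℝ (⊤ : ℕ∞) (fun p => fderiv ℝ f p v) s := by
  have h1 : ContDiffOn ℝ (⊤ : ℕ∞) (fderiv ℝ f) s :=
    hf.fderiv_of_isOpen hs (by norm_num)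
  exact (ContinuousLinearMap.apply ℝ ℝ v).contDiff.comp_contDiffOn h1

lemma pair_decomp {n : ℕ} (u : Fin n → ℝ) :
    ((0, u) : (Fin n → ℝ) × (Fin n → ℝ))
      = ∑ b, u b • (((0 : Fin n → ℝ), (Pi.single b 1 : Fin n → ℝ))
          : (Fin n → ℝ) × (Fin n → ℝ)) := by
  rw [Prod.ext_iff]
  constructor
  · simp [Prod.fst_sum]
  · simp only [Prod.snd_sum, Prod.smul_mk]
    funext i
    simp [Pi.single_apply, Finset.sum_apply, mul_ite, Finset.sum_ite_eq]

lemma det_contDiffOn {n : ℕ} {M : (Fin n → ℝ) → Matrix (Fin n) (Fin n) ℝ} {s : Set (Fin n → ℝ)}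
    (h : ∀ i j, ContDiffOn ℝ (⊤ : ℕ∞) (fun x => M x i j) s) :
    ContDiffOn ℝ (⊤ : ℕ∞) (fun x => (M x).det) s := by
  simp_rw [Matrix.det_apply']
  apply ContDiffOn.sum
  intro σ _
  exact contDiffOn_const.mul (contDiffOn_prod (fun i _ => h (σ i) i))

lemma single_eq_smul {n : ℕ} (b : Fin n) (r : ℝ) :
    (Pi.single b r : Fin n → ℝ) = r • (Pi.single b 1 : Fin n → ℝ) := by
  funext i
  simp [Pi.single_apply, mul_ite]

lemma clm_ext_single {n : ℕ} {D D' : (Fin n → ℝ) →L[ℝ] ℝ}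
    (h : ∀ b, D (Pi.single b 1) = D' (Pi.single b 1)) : D = D' := by
  ext u
  conv_lhs => rw [← Finset.univ_sum_single u]
  conv_rhs => rw [← Finset.univ_sum_single u]
  rw [map_sum, map_sum]
  refine Finset.sum_congr rfl fun b _ => ?_
  rw [single_eq_smul, map_smul, map_smul, h b]

lemma diff_const_of_directional {n : ℕ} {φ ψ : (Fin n → ℝ) → ℝ}
    (hφ : Differentiable ℝ φ) (hψ : Differentiable ℝ ψ)
    (h : ∀ v b, fderiv ℝ φ v (Pi.single b 1) = fderiv ℝ ψ v (Pi.single b 1)) :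
    ∀ v, φ v - ψ v = φ 0 - ψ 0 := fun v =>
  is_const_of_fderiv_eq_zero (𝕜 := ℝ) (hφ.sub hψ)
    (fun y => by
      rw [fderiv_sub (hφ y) (hψ y), sub_eq_zero]
      exact clm_ext_single (h y)) v 0

lemma slice_hasFDerivAt {n : ℕ} {f : (Fin n → ℝ) × (Fin n → ℝ) → ℝ} {x v : Fin n → ℝ}
    (hf : DifferentiableAt ℝ f (x, v)) :
    HasFDerivAt (fun u => f (x, u))
      ((fderiv ℝ f (x, v)).comp
        ((0 : (Fin n → ℝ) →L[ℝ] (Fin n → ℝ)).prod (ContinuousLinearMap.id ℝ (Fin n → ℝ)))) v :=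
  hf.hasFDerivAt.comp v (HasFDerivAt.prodMk (hasFDerivAt_const x v) (hasFDerivAt_id v))

lemma lin_hasFDerivAt {n : ℕ} (c : Fin n → ℝ) (v : Fin n → ℝ) :
    HasFDerivAt (fun u => ∑ b, c b * u b)
      (∑ b, c b • (ContinuousLinearMap.proj b : (Fin n → ℝ) →L[ℝ] ℝ)) v :=
  HasFDerivAt.fun_sum fun b _ =>
    ((ContinuousLinearMap.proj b : (Fin n → ℝ) →L[ℝ] ℝ).hasFDerivAt (x := v)).const_mul (c b)

lemma lin_deriv_apply {n : ℕ} (c : Fin n → ℝ) (a : Fin n) :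
    (∑ b, c b • (ContinuousLinearMap.proj b : (Fin n → ℝ) →L[ℝ] ℝ)) (Pi.single a 1) = c a := by
  simp [ContinuousLinearMap.sum_apply, Pi.single_apply, mul_ite, Finset.sum_ite_eq]

lemma quad_hasFDerivAt {n : ℕ} (H : Fin n → Fin n → ℝ) (v : Fin n → ℝ) :
    HasFDerivAt (fun u => (1/2 : ℝ) * ∑ b, ∑ c, H b c * u b * u c)
      ((1/2 : ℝ) • ∑ b, ∑ c, ((H b c * v b) • (ContinuousLinearMap.proj c : (Fin n → ℝ) →L[ℝ] ℝ)
          + v c • (H b c • (ContinuousLinearMap.proj b : (Fin n → ℝ) →L[ℝ] ℝ)))) v := by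
  refine HasFDerivAt.const_mul ?_ (1/2 : ℝ)
  refine HasFDerivAt.fun_sum fun b _ => ?_
  refine HasFDerivAt.fun_sum fun c _ => ?_
  exact (((ContinuousLinearMap.proj b : (Fin n → ℝ) →L[ℝ] ℝ).hasFDerivAt
    (x := v)).const_mul (H b c)).fun_mul
    ((ContinuousLinearMap.proj c : (Fin n → ℝ) →L[ℝ] ℝ).hasFDerivAt (x := v))

lemma quad_deriv_apply {n : ℕ} (H : Fin n → Fin n → ℝ) (hsym : ∀ b c, H b c = H c b)
    (v : Fin n → ℝ) (a : Fin n) :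
    ((1/2 : ℝ) • ∑ b, ∑ c, ((H b c * v b) • (ContinuousLinearMap.proj c : (Fin n → ℝ) →L[ℝ] ℝ)
        + v c • (H b c • (ContinuousLinearMap.proj b : (Fin n → ℝ) →L[ℝ] ℝ))))
      (Pi.single a 1) = ∑ c, H a c * v c := by
  simp only [ContinuousLinearMap.smul_apply, ContinuousLinearMap.sum_apply,
    ContinuousLinearMap.add_apply, ContinuousLinearMap.proj_apply, smul_eq_mul,
    Pi.single_apply, mul_ite, mul_one, mul_zero]
  have h1 : ∀ b : Fin n, (∑ c, ((if c = a then H b c * v b else 0)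
      + if b = a then v c * H b c else 0)) = H b a * v b
        + (if b = a then ∑ c, v c * H b c else 0) := by
    intro b
    rw [Finset.sum_add_distrib]
    congr 1
    · simp
    · split_ifs <;> simp
  rw [Finset.sum_congr rfl fun b _ => h1 b, Finset.sum_add_distrib,
    Finset.sum_ite_eq' Finset.univ a, if_pos (Finset.mem_univ a)]
  have h2 : ∑ b, H b a * v b = ∑ c, v c * H a c := by
    refine Finset.sum_congr rfl fun b _ => ?_
    rw [hsym b a, mul_comm]
  rw [h2, ← two_mul, ← mul_assoc]
  norm_num
  exact Finset.sum_congr rfl fun c _ => mul_comm _ _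

lemma slice_hasFDerivAt_fst {n : ℕ} {f : (Fin n → ℝ) × (Fin n → ℝ) → ℝ} {x v : Fin n → ℝ}
    (hf : DifferentiableAt ℝ f (x, v)) :
    HasFDerivAt (fun y => f (y, v))
      ((fderiv ℝ f (x, v)).comp
        ((ContinuousLinearMap.id ℝ (Fin n → ℝ)).prod (0 : (Fin n → ℝ) →L[ℝ] (Fin n → ℝ)))) x :=
  hf.hasFDerivAt.comp x (HasFDerivAt.prodMk (hasFDerivAt_id x) (hasFDerivAt_const v x))
lemma swap_mul_sum {n : ℕ} (r : ℝ) (m : Fin n → ℝ) (β : Fin n → Fin n → ℝ) (v : Fin n → ℝ) :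
    r * ∑ e, m e * ∑ b, β e b * v b = ∑ b, (r * ∑ e, m e * β e b) * v b := by
  calc r * ∑ e, m e * ∑ b, β e b * v b
      = ∑ e, ∑ b, r * (m e * β e b) * v b := by
        rw [Finset.mul_sum]
        refine Finset.sum_congr rfl fun e _ => ?_
        rw [Finset.mul_sum, Finset.mul_sum]
        refine Finset.sum_congr rfl fun b _ => ?_
        ring
    _ = ∑ b, ∑ e, r * (m e * β e b) * v b := Finset.sum_comm
    _ = ∑ b, (r * ∑ e, m e * β e b) * v b := by
        refine Finset.sum_congr rfl fun b _ => ?_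
        rw [Finset.mul_sum, Finset.sum_mul]

lemma swap_mul_sum2 {n : ℕ} (r : ℝ) (m : Fin n → ℝ) (γ : Fin n → Fin n → Fin n → ℝ)
    (v : Fin n → ℝ) :
    r * ∑ e, m e * ∑ b, ∑ c, γ e b c * v b * v c
      = ∑ b, ∑ c, (r * ∑ e, m e * γ e b c) * v b * v c := by
  calc r * ∑ e, m e * ∑ b, ∑ c, γ e b c * v b * v c
      = r * ∑ e, m e * ∑ b, (∑ c, γ e b c * v c) * v b := by
        congr 1
        refine Finset.sum_congr rfl fun e _ => ?_
        congr 1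
        refine Finset.sum_congr rfl fun b _ => ?_
        rw [Finset.sum_mul]
        refine Finset.sum_congr rfl fun c _ => ?_
        ring
    _ = ∑ b, (r * ∑ e, m e * ∑ c, γ e b c * v c) * v b := swap_mul_sum r m _ v
    _ = ∑ b, (∑ c, (r * ∑ e, m e * γ e b c) * v c) * v b := by
        refine Finset.sum_congr rfl fun b _ => ?_
        rw [swap_mul_sum r m (fun e c => γ e b c) v]
    _ = ∑ b, ∑ c, (r * ∑ e, m e * γ e b c) * v b * v c := by
        refine Finset.sum_congr rfl fun b _ => ?_
        rw [Finset.sum_mul]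
        refine Finset.sum_congr rfl fun c _ => ?_
        ring

/-- **Most general force variational with multiplier `e^{−ω} g`** (Proposition 3.2): if the
system `e^{−ω} g_{ab}(ẍ^b − F^b)` is the Euler–Lagrange expression of some smooth Lagrangian,
then `F^a = −(Γ[g]^a_{bc} + L^a_{bc}) v^b v^c + P^a_b v^b + S^a`, where `L` is the
disformation of the Weyl non-metricity `Q_{abc} = ∂_a ω g_{bc}`. -/
theorem force_variational_multiplier_weyl {n : ℕ} (U : Set (Fin n → ℝ)) (hU : IsOpen U)
    (g : (Fin n → ℝ) → Fin n → Fin n → ℝ)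
    (hg : ContDiffOn ℝ (⊤ : ℕ∞) g U)
    (hgsym : ∀ x ∈ U, ∀ a b, g x a b = g x b a)
    (hginv : ∀ x ∈ U, IsUnit (Matrix.of (g x)).det)
    (ω : (Fin n → ℝ) → ℝ) (hω : ContDiffOn ℝ (⊤ : ℕ∞) ω U)
    (F : (Fin n → ℝ) → (Fin n → ℝ) → Fin n → ℝ)
    (hF : ContDiffOn ℝ (⊤ : ℕ∞) (fun p : (Fin n → ℝ) × (Fin n → ℝ) => F p.1 p.2)
      (U ×ˢ (Set.univ : Set (Fin n → ℝ))))
    (L : (Fin n → ℝ) × (Fin n → ℝ) → ℝ)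
    (hL : ContDiffOn ℝ (⊤ : ℕ∞) L (U ×ˢ (Set.univ : Set (Fin n → ℝ))))
    (hEL : ∀ x ∈ U, ∀ v w : Fin n → ℝ, ∀ a,
      ∑ b, pdv (pdv L a) b (x, v) * w b + ∑ b, pdx (pdv L a) b (x, v) * v b
        - pdx L a (x, v) =
      ∑ b, Real.exp (-ω x) * g x a b * (w b - F x v b)) :
    ∃ P : (Fin n → ℝ) → Fin n → Fin n → ℝ, ∃ S : (Fin n → ℝ) → Fin n → ℝ,
      ContDiffOn ℝ (⊤ : ℕ∞) P U ∧ ContDiffOn ℝ (⊤ : ℕ∞) S U ∧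
      ∀ x ∈ U, ∀ v : Fin n → ℝ, ∀ a,
        F x v a = - (∑ b, ∑ c,
            (christoffel g x a b c
              + ((1 / 2) * ∑ d, minv (g x) a d * pd ω d x * g x b c
                - (1 / 2) * (pd ω b x * (if a = c then (1 : ℝ) else 0)
                    + pd ω c x * (if a = b then (1 : ℝ) else 0)))) * v b * v c)
          + ∑ b, P x a b * v b + S x a := by
  classical
  have hΩ : IsOpen (U ×ˢ (Set.univ : Set (Fin n → ℝ))) := hU.prod isOpen_univ
  have hmem : ∀ x ∈ U, ∀ v : Fin n → ℝ, (x, v) ∈ U ×ˢ (Set.univ : Set (Fin n → ℝ)) :=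
    fun x hx v => ⟨hx, trivial⟩
  set Hf : (Fin n → ℝ) → Fin n → Fin n → ℝ := fun y a b => Real.exp (-ω y) * g y a b with hHfdef
  set Af : (Fin n → ℝ) → Fin n → ℝ := fun y b => pdv L b (y, 0) with hAfdef
  set Bf : (Fin n → ℝ) → ℝ := fun y => L (y, 0) with hBfdef
  -- entry smoothness
  have hgE : ∀ a b, ContDiffOn ℝ (⊤ : ℕ∞) (fun y => g y a b) U :=
    fun a b => contDiffOn_pi.mp (contDiffOn_pi.mp hg a) b
  have hHfE : ∀ a b, ContDiffOn ℝ (⊤ : ℕ∞) (fun y => Hf y a b) U :=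
    fun a b => (Real.contDiff_exp.comp_contDiffOn hω.neg).mul (hgE a b)
  have hpdvL : ∀ a, ContDiffOn ℝ (⊤ : ℕ∞) (pdv L a) (U ×ˢ (Set.univ : Set (Fin n → ℝ))) :=
    fun a => fderiv_apply_contDiffOn hL hΩ _
  have hembed : ContDiff ℝ (⊤ : ℕ∞) (fun y : Fin n → ℝ => (y, (0 : Fin n → ℝ))) :=
    contDiff_id.prodMk contDiff_const
  have hAfE : ∀ b, ContDiffOn ℝ (⊤ : ℕ∞) (fun y => Af y b) U :=
    fun b => (hpdvL b).comp hembed.contDiffOn (fun x hx => hmem x hx 0)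
  have hBfE : ContDiffOn ℝ (⊤ : ℕ∞) Bf U :=
    hL.comp hembed.contDiffOn (fun x hx => hmem x hx 0)
  -- Step A
  have hA : ∀ x ∈ U, ∀ (v : Fin n → ℝ) (a b : Fin n),
      pdv (pdv L a) b (x, v) = Hf x a b := by
    intro x hx v a b
    have e1 := hEL x hx v (Pi.single b 1) a
    have e2 := hEL x hx v 0 a
    simp only [Pi.zero_apply, zero_sub, mul_zero, Finset.sum_const_zero, mul_sub, mul_neg,
      Finset.sum_sub_distrib, Finset.sum_neg_distrib] at e1 e2
    have key : (∑ c, pdv (pdv L a) c (x, v) * (Pi.single b 1 : Fin n → ℝ) c)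
        = ∑ c, Real.exp (-ω x) * g x a c * (Pi.single b 1 : Fin n → ℝ) c := by linarith
    rw [hHfdef]
    simpa [Pi.single_apply, mul_ite, Finset.sum_ite_eq'] using key
  -- Step B
  have hB : ∀ x ∈ U, ∀ (v : Fin n → ℝ) (a : Fin n),
      ∑ c, pdx (pdv L a) c (x, v) * v c - pdx L a (x, v) = -∑ b, Hf x a b * F x v b := by
    intro x hx v a
    have e2 := hEL x hx v 0 a
    simp only [Pi.zero_apply, zero_sub, mul_zero, Finset.sum_const_zero, mul_neg, zero_add,
      Finset.sum_neg_distrib] at e2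
    rw [hHfdef]
    simpa using e2
  -- Step C1
  have hC1 : ∀ x ∈ U, ∀ (v : Fin n → ℝ) (a : Fin n),
      pdv L a (x, v) = Af x a + ∑ b, Hf x a b * v b := by
    intro x hx v₀ a
    have hdiffpdvL : ∀ v : Fin n → ℝ, DifferentiableAt ℝ (pdv L a) (x, v) := fun v =>
      ((hpdvL a).differentiableOn (by norm_num)).differentiableAt (hΩ.mem_nhds (hmem x hx v))
    have hφ : Differentiable ℝ (fun u => pdv L a (x, u)) := fun u =>
      (slice_hasFDerivAt (hdiffpdvL u)).differentiableAt
    have hψ : Differentiable ℝ (fun u : Fin n → ℝ => ∑ b, Hf x a b * u b) := fun u =>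
      (lin_hasFDerivAt (Hf x a) u).differentiableAt
    have hdir : ∀ (v : Fin n → ℝ) (b : Fin n),
        fderiv ℝ (fun u => pdv L a (x, u)) v (Pi.single b 1)
          = fderiv ℝ (fun u => ∑ b, Hf x a b * u b) v (Pi.single b 1) := by
      intro v b
      rw [(slice_hasFDerivAt (hdiffpdvL v)).fderiv, (lin_hasFDerivAt (Hf x a) v).fderiv,
        lin_deriv_apply]
      simp only [ContinuousLinearMap.comp_apply, ContinuousLinearMap.prod_apply,
        ContinuousLinearMap.zero_apply, ContinuousLinearMap.id_apply]
      exact hA x hx v a b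
    have key := diff_const_of_directional hφ hψ hdir v₀
    have h0 : ∑ b, Hf x a b * (0 : Fin n → ℝ) b = 0 := by simp
    rw [h0] at key
    have hAf0 : pdv L a (x, 0) = Af x a := rfl
    rw [hAf0] at key
    linarith
  -- Step C2
  have hC2 : ∀ x ∈ U, ∀ v : Fin n → ℝ,
      L (x, v) = Bf x + ∑ b, Af x b * v b + (1/2) * ∑ b, ∑ c, Hf x b c * v b * v c := by
    intro x hx v₀
    have hsym : ∀ b c, Hf x b c = Hf x c b := by
      intro b c
      rw [hHfdef]
      simp only
      rw [hgsym x hx b c]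
    have hdiffL : ∀ v : Fin n → ℝ, DifferentiableAt ℝ L (x, v) := fun v =>
      (hL.differentiableOn (by norm_num)).differentiableAt (hΩ.mem_nhds (hmem x hx v))
    have hφ : Differentiable ℝ (fun u => L (x, u)) := fun u =>
      (slice_hasFDerivAt (hdiffL u)).differentiableAt
    have hψder : ∀ u : Fin n → ℝ, HasFDerivAt
        (fun u => ∑ b, Af x b * u b + (1/2 : ℝ) * ∑ b, ∑ c, Hf x b c * u b * u c)
        ((∑ b, Af x b • (ContinuousLinearMap.proj b : (Fin n → ℝ) →L[ℝ] ℝ))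
          + ((1/2 : ℝ) • ∑ b, ∑ c, ((Hf x b c * u b) •
              (ContinuousLinearMap.proj c : (Fin n → ℝ) →L[ℝ] ℝ)
            + u c • (Hf x b c • (ContinuousLinearMap.proj b : (Fin n → ℝ) →L[ℝ] ℝ))))) u :=
      fun u => (lin_hasFDerivAt (Af x) u).add (quad_hasFDerivAt (Hf x) u)
    have hψ : Differentiable ℝ
        (fun u : Fin n → ℝ => ∑ b, Af x b * u b + (1/2 : ℝ) * ∑ b, ∑ c, Hf x b c * u b * u c) :=
      fun u => (hψder u).differentiableAt
    have hdir : ∀ (v : Fin n → ℝ) (b : Fin n),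
        fderiv ℝ (fun u => L (x, u)) v (Pi.single b 1)
          = fderiv ℝ (fun u => ∑ b, Af x b * u b
              + (1/2 : ℝ) * ∑ b, ∑ c, Hf x b c * u b * u c) v (Pi.single b 1) := by
      intro v b
      rw [(slice_hasFDerivAt (hdiffL v)).fderiv, (hψder v).fderiv]
      simp only [ContinuousLinearMap.comp_apply, ContinuousLinearMap.prod_apply,
        ContinuousLinearMap.zero_apply, ContinuousLinearMap.id_apply,
        ContinuousLinearMap.add_apply]
      rw [lin_deriv_apply, quad_deriv_apply (Hf x) hsym]
      exact hC1 x hx v b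
    have key := diff_const_of_directional hφ hψ hdir v₀
    have h0 : ∑ b, Af x b * (0 : Fin n → ℝ) b
        + (1/2 : ℝ) * ∑ b, ∑ c, Hf x b c * (0 : Fin n → ℝ) b * (0 : Fin n → ℝ) c = 0 := by
      simp
    rw [h0] at key
    have hBf0 : L (x, (0 : Fin n → ℝ)) = Bf x := rfl
    rw [hBf0] at key
    linarith
  -- Step D1
  have hD1 : ∀ x ∈ U, ∀ (v : Fin n → ℝ) (a : Fin n),
      pdx L a (x, v) = pd Bf a x + ∑ b, pd (fun y => Af y b) a x * v b
        + (1/2) * ∑ b, ∑ c, pd (fun y => Hf y b c) a x * v b * v c := by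
    intro x hx v a
    have hdiffL : DifferentiableAt ℝ L (x, v) :=
      (hL.differentiableOn (by norm_num)).differentiableAt (hΩ.mem_nhds (hmem x hx v))
    have hxs : pdx L a (x, v) = fderiv ℝ (fun y => L (y, v)) x (Pi.single a 1) := by
      rw [(slice_hasFDerivAt_fst hdiffL).fderiv]
      simp [pdx, ContinuousLinearMap.comp_apply, ContinuousLinearMap.prod_apply]
    have hev : (fun y => L (y, v)) =ᶠ[nhds x] (fun y => Bf y + ∑ b, Af y b * v b
        + (1/2 : ℝ) * ∑ b, ∑ c, Hf y b c * v b * v c) := by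
      filter_upwards [hU.mem_nhds hx] with y hy
      exact hC2 y hy v
    rw [hxs, hev.fderiv_eq]
    have diffBf : DifferentiableAt ℝ Bf x :=
      (hBfE.differentiableOn (by norm_num)).differentiableAt (hU.mem_nhds hx)
    have diffAf : ∀ b, DifferentiableAt ℝ (fun y => Af y b) x := fun b =>
      ((hAfE b).differentiableOn (by norm_num)).differentiableAt (hU.mem_nhds hx)
    have diffHf : ∀ b c, DifferentiableAt ℝ (fun y => Hf y b c) x := fun b c =>
      ((hHfE b c).differentiableOn (by norm_num)).differentiableAt (hU.mem_nhds hx)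
    have hder : HasFDerivAt (fun y => Bf y + ∑ b, Af y b * v b
        + (1/2 : ℝ) * ∑ b, ∑ c, Hf y b c * v b * v c)
        ((fderiv ℝ Bf x + ∑ b, v b • fderiv ℝ (fun y => Af y b) x)
          + (1/2 : ℝ) • ∑ b, ∑ c, (v b * v c) • fderiv ℝ (fun y => Hf y b c) x) x := by
      refine HasFDerivAt.add (HasFDerivAt.add diffBf.hasFDerivAt ?_) ?_
      · exact HasFDerivAt.fun_sum fun b _ => ((diffAf b).hasFDerivAt.mul_const (v b))
      · refine HasFDerivAt.const_mul ?_ _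
        refine HasFDerivAt.fun_sum fun b _ => HasFDerivAt.fun_sum fun c _ => ?_
        have h := ((diffHf b c).hasFDerivAt.mul_const (v b)).mul_const (v c)
        have : (v c) • ((v b) • fderiv ℝ (fun y => Hf y b c) x)
            = (v b * v c) • fderiv ℝ (fun y => Hf y b c) x := by
          rw [smul_smul, mul_comm]
        rwa [this] at h
    rw [hder.fderiv]
    simp only [ContinuousLinearMap.add_apply, ContinuousLinearMap.sum_apply,
      ContinuousLinearMap.smul_apply, smul_eq_mul, pd]
    congr 1
    · congr 1
      exact Finset.sum_congr rfl fun b _ => mul_comm _ _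
    · congr 1
      refine Finset.sum_congr rfl fun b _ => Finset.sum_congr rfl fun c _ => ?_
      ring
  -- Step D2
  have hD2 : ∀ x ∈ U, ∀ (v : Fin n → ℝ) (a c : Fin n),
      pdx (pdv L a) c (x, v) = pd (fun y => Af y a) c x
        + ∑ b, pd (fun y => Hf y a b) c x * v b := by
    intro x hx v a c
    have hdiffpdvL : DifferentiableAt ℝ (pdv L a) (x, v) :=
      ((hpdvL a).differentiableOn (by norm_num)).differentiableAt (hΩ.mem_nhds (hmem x hx v))
    have hxs : pdx (pdv L a) c (x, v)
        = fderiv ℝ (fun y => pdv L a (y, v)) x (Pi.single c 1) := by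
      rw [(slice_hasFDerivAt_fst hdiffpdvL).fderiv]
      simp [pdx, ContinuousLinearMap.comp_apply, ContinuousLinearMap.prod_apply]
    have hev : (fun y => pdv L a (y, v)) =ᶠ[nhds x]
        (fun y => Af y a + ∑ b, Hf y a b * v b) := by
      filter_upwards [hU.mem_nhds hx] with y hy
      exact hC1 y hy v a
    rw [hxs, hev.fderiv_eq]
    have diffAf : DifferentiableAt ℝ (fun y => Af y a) x :=
      ((hAfE a).differentiableOn (by norm_num)).differentiableAt (hU.mem_nhds hx)
    have diffHf : ∀ b, DifferentiableAt ℝ (fun y => Hf y a b) x := fun b =>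
      ((hHfE a b).differentiableOn (by norm_num)).differentiableAt (hU.mem_nhds hx)
    have hder : HasFDerivAt (fun y => Af y a + ∑ b, Hf y a b * v b)
        (fderiv ℝ (fun y => Af y a) x + ∑ b, v b • fderiv ℝ (fun y => Hf y a b) x) x :=
      HasFDerivAt.add diffAf.hasFDerivAt
        (HasFDerivAt.fun_sum fun b _ => ((diffHf b).hasFDerivAt.mul_const (v b)))
    rw [hder.fderiv]
    simp only [ContinuousLinearMap.add_apply, ContinuousLinearMap.sum_apply,
      ContinuousLinearMap.smul_apply, smul_eq_mul, pd]
    congr 1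
    exact Finset.sum_congr rfl fun b _ => mul_comm _ _
  -- Step E
  have hE : ∀ x ∈ U, ∀ (v : Fin n → ℝ) (a : Fin n),
      ∑ b, Hf x a b * F x v b =
        pd Bf a x + ∑ b, (pd (fun y => Af y b) a x - pd (fun y => Af y a) b x) * v b
          + ∑ b, ∑ c, ((1/2) * pd (fun y => Hf y b c) a x
              - pd (fun y => Hf y a b) c x) * v b * v c := by
    intro x hx v a
    have hb := hB x hx v a
    simp only [hD1 x hx v, hD2 x hx v] at hb
    have e1 : ∑ c, (pd (fun y => Af y a) c x + ∑ b, pd (fun y => Hf y a b) c x * v b) * v c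
        = ∑ c, pd (fun y => Af y a) c x * v c
          + ∑ b, ∑ c, pd (fun y => Hf y a b) c x * v b * v c := by
      have h1 : ∀ c : Fin n,
          (pd (fun y => Af y a) c x + ∑ b, pd (fun y => Hf y a b) c x * v b) * v c
            = pd (fun y => Af y a) c x * v c
              + ∑ b, pd (fun y => Hf y a b) c x * v b * v c := by
        intro c
        rw [add_mul, Finset.sum_mul]
      rw [Finset.sum_congr rfl fun c _ => h1 c, Finset.sum_add_distrib]
      congr 1
      exact Finset.sum_comm
    rw [e1] at hb
    have e2 : ∑ b, (pd (fun y => Af y b) a x - pd (fun y => Af y a) b x) * v b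
        = ∑ b, pd (fun y => Af y b) a x * v b - ∑ b, pd (fun y => Af y a) b x * v b := by
      rw [← Finset.sum_sub_distrib]
      exact Finset.sum_congr rfl fun b _ => sub_mul _ _ _
    have e3 : ∑ b, ∑ c, ((1/2 : ℝ) * pd (fun y => Hf y b c) a x
          - pd (fun y => Hf y a b) c x) * v b * v c
        = (1/2 : ℝ) * (∑ b, ∑ c, pd (fun y => Hf y b c) a x * v b * v c)
          - ∑ b, ∑ c, pd (fun y => Hf y a b) c x * v b * v c := by
      rw [Finset.mul_sum, ← Finset.sum_sub_distrib]
      refine Finset.sum_congr rfl fun b _ => ?_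
      rw [Finset.mul_sum, ← Finset.sum_sub_distrib]
      refine Finset.sum_congr rfl fun c _ => ?_
      ring
    rw [e2, e3]
    linarith
  -- matrix inversion
  have hFinv : ∀ x ∈ U, ∀ (y R : Fin n → ℝ), (∀ a, ∑ b, Hf x a b * y b = R a) →
      ∀ e, y e = Real.exp (ω x) * ∑ a, minv (g x) e a * R a := by
    intro x hx y R hR e
    have h1 : ((Matrix.of (g x))⁻¹ * Matrix.of (g x)) = 1 :=
      Matrix.nonsing_inv_mul _ (hginv x hx)
    have key : ∑ a, minv (g x) e a * R a = Real.exp (-ω x) * y e := by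
      calc ∑ a, minv (g x) e a * R a
          = ∑ a, minv (g x) e a * ∑ b, Hf x a b * y b := by
            exact Finset.sum_congr rfl fun a _ => by rw [hR a]
        _ = ∑ a, ∑ b, minv (g x) e a * (Real.exp (-ω x) * g x a b * y b) := by
            refine Finset.sum_congr rfl fun a _ => ?_
            rw [Finset.mul_sum]
        _ = ∑ b, ∑ a, Real.exp (-ω x) * ((Matrix.of (g x))⁻¹ e a * Matrix.of (g x) a b * y b) := by
            rw [Finset.sum_comm]
            refine Finset.sum_congr rfl fun b _ => Finset.sum_congr rfl fun a _ => ?_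
            simp only [minv, Matrix.of_apply]
            ring
        _ = Real.exp (-ω x) * ∑ b, (∑ a, (Matrix.of (g x))⁻¹ e a * Matrix.of (g x) a b) * y b := by
            rw [Finset.mul_sum]
            refine Finset.sum_congr rfl fun b _ => ?_
            rw [Finset.sum_mul, Finset.mul_sum]
        _ = Real.exp (-ω x) * ∑ b, (1 : Matrix (Fin n) (Fin n) ℝ) e b * y b := by
            congr 1
            refine Finset.sum_congr rfl fun b _ => ?_
            rw [← Matrix.mul_apply, h1]
        _ = Real.exp (-ω x) * y e := by
            congr 1
            simp [Matrix.one_apply, Finset.sum_ite_eq]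
    rw [key, ← mul_assoc, ← Real.exp_add]
    simp
  -- derivative of Hf entries
  have hpdH : ∀ x ∈ U, ∀ b c d, pd (fun y => Hf y b c) d x
      = Real.exp (-ω x) * (pd (fun y => g y b c) d x - pd ω d x * g x b c) := by
    intro x hx b c d
    have hωd : DifferentiableAt ℝ ω x :=
      (hω.differentiableOn (by norm_num)).differentiableAt (hU.mem_nhds hx)
    have hgd : DifferentiableAt ℝ (fun y => g y b c) x :=
      ((hgE b c).differentiableOn (by norm_num)).differentiableAt (hU.mem_nhds hx)
    have hexp : HasFDerivAt (fun y => Real.exp (-ω y))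
        (Real.exp (-ω x) • -fderiv ℝ ω x) x := by
      have := (hωd.hasFDerivAt.neg).exp
      simpa using this
    have hprod := hexp.fun_mul hgd.hasFDerivAt
    simp only [pd, hHfdef]
    rw [hprod.fderiv]
    simp only [ContinuousLinearMap.add_apply, ContinuousLinearMap.smul_apply,
      ContinuousLinearMap.neg_apply, smul_eq_mul]
    ring
  -- symmetry of derivatives of g
  have hpdgsym : ∀ x ∈ U, ∀ b c d,
      pd (fun y => g y b c) d x = pd (fun y => g y c b) d x := by
    intro x hx b c d
    have hev : (fun y => g y b c) =ᶠ[nhds x] (fun y => g y c b) := by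
      filter_upwards [hU.mem_nhds hx] with y hy
      exact hgsym y hy b c
    simp only [pd]
    rw [hev.fderiv_eq]
  -- smoothness of inverse metric entries
  have hminvE : ∀ a b, ContDiffOn ℝ (⊤ : ℕ∞) (fun x => minv (g x) a b) U := by
    intro a b
    have hdet : ContDiffOn ℝ (⊤ : ℕ∞) (fun x => (Matrix.of (g x)).det) U :=
      det_contDiffOn (fun i j => hgE i j)
    have hadj : ContDiffOn ℝ (⊤ : ℕ∞) (fun x => (Matrix.of (g x)).adjugate a b) U := by
      simp only [Matrix.adjugate_apply]
      apply det_contDiffOn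
      intro i j
      simp only [Matrix.updateRow_apply]
      by_cases h : i = b
      · simp only [h, if_pos rfl]
        exact contDiffOn_const
      · simp only [h, if_neg h]
        exact hgE i j
    have heq : ∀ x ∈ U, ((Matrix.of (g x)).det)⁻¹ * (Matrix.of (g x)).adjugate a b
        = minv (g x) a b := by
      intro x hx
      simp only [minv, Matrix.inv_def, Matrix.smul_apply, smul_eq_mul, Ring.inverse_eq_inv']
    refine ContDiffOn.congr ?_ (fun x hx => (heq x hx).symm)
    exact (hdet.inv (fun x hx => (hginv x hx).ne_zero)).mul hadj
  have hexpE : ContDiffOn ℝ (⊤ : ℕ∞) (fun x => Real.exp (ω x)) U :=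
    Real.contDiff_exp.comp_contDiffOn hω
  have hpdAfE : ∀ b e : Fin n, ContDiffOn ℝ (⊤ : ℕ∞) (fun x => pd (fun y => Af y b) e x) U :=
    fun b e => fderiv_apply_contDiffOn (hAfE b) hU _
  have hpdBfE : ∀ e : Fin n, ContDiffOn ℝ (⊤ : ℕ∞) (fun x => pd Bf e x) U :=
    fun e => fderiv_apply_contDiffOn hBfE hU _
  refine ⟨fun x a b => Real.exp (ω x) * ∑ e, minv (g x) a e *
      (pd (fun y => Af y b) e x - pd (fun y => Af y e) b x),
    fun x a => Real.exp (ω x) * ∑ e, minv (g x) a e * pd Bf e x, ?_, ?_, ?_⟩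
  · refine contDiffOn_pi.mpr fun a => contDiffOn_pi.mpr fun b => ?_
    exact hexpE.mul (ContDiffOn.sum fun e _ =>
      (hminvE a e).mul ((hpdAfE b e).sub (hpdAfE e b)))
  · refine contDiffOn_pi.mpr fun a => ?_
    exact hexpE.mul (ContDiffOn.sum fun e _ => (hminvE a e).mul (hpdBfE e))
  · intro x hx v a
    beta_reduce
    have hee : Real.exp (ω x) * Real.exp (-ω x) = 1 := by
      rw [← Real.exp_add]; simp
    have hdelta : ∀ b' : Fin n,
        ∑ e, minv (g x) a e * g x e b' = (if a = b' then (1:ℝ) else 0) := by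
      intro b'
      have h1 : ((Matrix.of (g x))⁻¹ * Matrix.of (g x)) = 1 :=
        Matrix.nonsing_inv_mul _ (hginv x hx)
      have h2 := congrFun (congrFun h1 a) b'
      simpa [Matrix.mul_apply, minv, Matrix.one_apply] using h2
    have hFa : F x v a = Real.exp (ω x) * ∑ e, minv (g x) a e *
        (pd Bf e x + ∑ b, (pd (fun y => Af y b) e x - pd (fun y => Af y e) b x) * v b
          + ∑ b, ∑ c, ((1/2 : ℝ) * pd (fun y => Hf y b c) e x
              - pd (fun y => Hf y e b) c x) * v b * v c) :=
      hFinv x hx (F x v) _ (hE x hx v) a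
    have hsplit : F x v a =
        (∑ b, ∑ c, (Real.exp (ω x) * ∑ e, minv (g x) a e *
            ((1/2 : ℝ) * pd (fun y => Hf y b c) e x - pd (fun y => Hf y e b) c x)) * v b * v c)
        + ((∑ b, (Real.exp (ω x) * ∑ e, minv (g x) a e *
            (pd (fun y => Af y b) e x - pd (fun y => Af y e) b x)) * v b)
        + Real.exp (ω x) * ∑ e, minv (g x) a e * pd Bf e x) := by
      rw [hFa]
      have e0 : ∑ e, minv (g x) a e *
          (pd Bf e x + ∑ b, (pd (fun y => Af y b) e x - pd (fun y => Af y e) b x) * v b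
            + ∑ b, ∑ c, ((1/2 : ℝ) * pd (fun y => Hf y b c) e x
                - pd (fun y => Hf y e b) c x) * v b * v c)
          = (∑ e, minv (g x) a e * ∑ b, ∑ c, ((1/2 : ℝ) * pd (fun y => Hf y b c) e x
                - pd (fun y => Hf y e b) c x) * v b * v c)
            + ((∑ e, minv (g x) a e * ∑ b, (pd (fun y => Af y b) e x
                - pd (fun y => Af y e) b x) * v b)
            + ∑ e, minv (g x) a e * pd Bf e x) := by
        rw [← Finset.sum_add_distrib, ← Finset.sum_add_distrib]
        refine Finset.sum_congr rfl fun e _ => ?_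
        ring
      rw [e0, mul_add, mul_add]
      rw [swap_mul_sum2 (Real.exp (ω x)) (minv (g x) a) _ v,
        swap_mul_sum (Real.exp (ω x)) (minv (g x) a) _ v]
    set K : Fin n → Fin n → ℝ := fun b c =>
      (1/2 : ℝ) * ∑ e, minv (g x) a e * pd (fun y => g y c e) b x
        - (1/2 : ℝ) * ∑ e, minv (g x) a e * pd (fun y => g y b e) c x
        + (1/2 : ℝ) * pd ω c x * (if a = b then (1:ℝ) else 0)
        - (1/2 : ℝ) * pd ω b x * (if a = c then (1:ℝ) else 0) with hKdef
    have hQ : ∀ b c : Fin n, Real.exp (ω x) * ∑ e, minv (g x) a e *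
        ((1/2 : ℝ) * pd (fun y => Hf y b c) e x - pd (fun y => Hf y e b) c x)
        = (1/2 : ℝ) * ∑ e, minv (g x) a e * pd (fun y => g y b c) e x
          - (1/2 : ℝ) * ∑ e, minv (g x) a e * pd ω e x * g x b c
          - ∑ e, minv (g x) a e * pd (fun y => g y b e) c x
          + pd ω c x * (if a = b then (1:ℝ) else 0) := by
      intro b c
      have step : ∀ e : Fin n, Real.exp (ω x) * (minv (g x) a e *
          ((1/2 : ℝ) * pd (fun y => Hf y b c) e x - pd (fun y => Hf y e b) c x))
          = (1/2 : ℝ) * (minv (g x) a e * pd (fun y => g y b c) e x)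
            - (1/2 : ℝ) * (minv (g x) a e * pd ω e x * g x b c)
            - minv (g x) a e * pd (fun y => g y b e) c x
            + pd ω c x * (minv (g x) a e * g x e b) := by
        intro e
        rw [hpdH x hx b c e, hpdH x hx e b c, hpdgsym x hx e b c]
        linear_combination (minv (g x) a e * ((1/2 : ℝ) * (pd (fun y => g y b c) e x
          - pd ω e x * g x b c) - (pd (fun y => g y b e) c x - pd ω c x * g x e b))) * hee
      rw [Finset.mul_sum, Finset.sum_congr rfl fun e _ => step e]
      rw [Finset.sum_add_distrib, Finset.sum_sub_distrib, Finset.sum_sub_distrib,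
        ← Finset.mul_sum, ← Finset.mul_sum, ← Finset.mul_sum, hdelta b]
    have hchris : ∀ b c : Fin n, christoffel g x a b c
        = (1/2 : ℝ) * ∑ e, minv (g x) a e * pd (fun y => g y c e) b x
          + (1/2 : ℝ) * ∑ e, minv (g x) a e * pd (fun y => g y b e) c x
          - (1/2 : ℝ) * ∑ e, minv (g x) a e * pd (fun y => g y b c) e x := by
      intro b c
      simp only [christoffel]
      rw [Finset.sum_congr rfl (fun d (_ : d ∈ Finset.univ) => (by ring : minv (g x) a d *
          (pd (fun y => g y c d) b x + pd (fun y => g y b d) c x - pd (fun y => g y b c) d x)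
          = minv (g x) a d * pd (fun y => g y c d) b x
            + minv (g x) a d * pd (fun y => g y b d) c x
            - minv (g x) a d * pd (fun y => g y b c) d x))]
      rw [Finset.sum_sub_distrib, Finset.sum_add_distrib]
      ring
    have hcoef : ∀ b c : Fin n, (Real.exp (ω x) * ∑ e, minv (g x) a e *
        ((1/2 : ℝ) * pd (fun y => Hf y b c) e x - pd (fun y => Hf y e b) c x))
        = -(christoffel g x a b c
            + ((1 / 2) * ∑ d, minv (g x) a d * pd ω d x * g x b c
              - (1 / 2) * (pd ω b x * (if a = c then (1 : ℝ) else 0)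
                  + pd ω c x * (if a = b then (1 : ℝ) else 0)))) + K b c := by
      intro b c
      rw [hQ b c, hchris b c]
      simp only [hKdef]
      ring
    have hKasym : ∀ b c : Fin n, K c b = -K b c := by
      intro b c
      simp only [hKdef]
      ring
    have hKzero : ∑ b, ∑ c, K b c * v b * v c = 0 := by
      have h1 : ∑ b, ∑ c, K b c * v b * v c = -∑ b, ∑ c, K c b * v b * v c := by
        rw [← Finset.sum_neg_distrib]
        refine Finset.sum_congr rfl fun b _ => ?_
        rw [← Finset.sum_neg_distrib]
        refine Finset.sum_congr rfl fun c _ => ?_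
        rw [hKasym c b]
        ring
      have h2 : ∑ b, ∑ c, K c b * v b * v c = ∑ b, ∑ c, K b c * v b * v c := by
        rw [Finset.sum_comm]
        refine Finset.sum_congr rfl fun c _ => Finset.sum_congr rfl fun b _ => ?_
        ring
      linarith
    have hquadeq : (∑ b, ∑ c, (Real.exp (ω x) * ∑ e, minv (g x) a e *
        ((1/2 : ℝ) * pd (fun y => Hf y b c) e x - pd (fun y => Hf y e b) c x)) * v b * v c)
        = -(∑ b, ∑ c, (christoffel g x a b c
            + ((1 / 2) * ∑ d, minv (g x) a d * pd ω d x * g x b c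
              - (1 / 2) * (pd ω b x * (if a = c then (1 : ℝ) else 0)
                  + pd ω c x * (if a = b then (1 : ℝ) else 0)))) * v b * v c) := by
      have e1 : ∀ b c : Fin n, (Real.exp (ω x) * ∑ e, minv (g x) a e *
          ((1/2 : ℝ) * pd (fun y => Hf y b c) e x - pd (fun y => Hf y e b) c x)) * v b * v c
          = -((christoffel g x a b c
            + ((1 / 2) * ∑ d, minv (g x) a d * pd ω d x * g x b c
              - (1 / 2) * (pd ω b x * (if a = c then (1 : ℝ) else 0)
                  + pd ω c x * (if a = b then (1 : ℝ) else 0)))) * v b * v c)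
            + K b c * v b * v c := by
        intro b c
        rw [hcoef b c]
        ring
      rw [Finset.sum_congr rfl fun b _ => Finset.sum_congr rfl fun c _ => e1 b c]
      rw [Finset.sum_congr rfl fun b (_ : b ∈ Finset.univ) => Finset.sum_add_distrib,
        Finset.sum_add_distrib, hKzero, add_zero]
      rw [Finset.sum_congr rfl fun b (_ : b ∈ Finset.univ) => Finset.sum_neg_distrib _,
        Finset.sum_neg_distrib]
    rw [hsplit, hquadeq]
    ring
end

section
/- Second Helmholtz condition is equivalent to metric compatibility (eq. (H2) ⟺ eq. (MetricCompatibility)): Let U ⊆ ℝⁿ be open, Γ^a_{bc} : U → ℝ smooth connection coefficients that are symmetric in the lower indices (Γ^a_{bc} = Γ^a_{cb}), H : U → (Fin n → Fin n → ℝ) smooth with H(x) symmetric for every x (H depends only on position, not velocity), and define the force F^a(x,v) := −Σ_{b,c} Γ^a_{bc}(x) v^b v^c. Then the following are equivalent: (i) for all x ∈ U, v ∈ ℝⁿ and all indices a,b: Σ_c v^c ∂_c H_{ab}(x) + ½ Σ_c (H_{ac}(x) (∂F^c/∂v^b)(x,v) + H_{bc}(x) (∂F^c/∂v^a)(x,v))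 = 0; (ii) for all x ∈ U and all indices a,b,c: ∇_a H_{bc}(x) := ∂_a H_{bc}(x) − Σ_d (Γ^d_{ab}(x) H_{dc}(x) + Γ^d_{ac}(x) H_{bd}(x)) = 0. -/
open scoped BigOperators

/-- The quadratic force `F^a(x,v) = −Σ_{b,c} Γ^a_{bc}(x) v^b v^c`. -/
noncomputable def force {n : ℕ} (Γ : (Fin n → ℝ) → Fin n → Fin n → Fin n → ℝ)
    (x v : Fin n → ℝ) (a : Fin n) : ℝ :=
  - ∑ b, ∑ c, Γ x a b c * v b * v c

lemma force_hasFDeriv {n : ℕ} (Γ : (Fin n → ℝ) → Fin n → Fin n → Fin n → ℝ)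
    (x v : Fin n → ℝ) (c : Fin n) :
    HasFDerivAt (fun u => force Γ x u c)
      (-∑ p : Fin n, ∑ q : Fin n, Γ x c p q •
        (v p • (ContinuousLinearMap.proj q : (Fin n → ℝ) →L[ℝ] ℝ)
          + v q • (ContinuousLinearMap.proj p : (Fin n → ℝ) →L[ℝ] ℝ))) v := by
  have h : ∀ p q : Fin n, HasFDerivAt (fun u : Fin n → ℝ => Γ x c p q * u p * u q)
      (Γ x c p q • (v p • (ContinuousLinearMap.proj q : (Fin n → ℝ) →L[ℝ] ℝ)
        + v q • (ContinuousLinearMap.proj p : (Fin n → ℝ) →L[ℝ] ℝ))) v := by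
    intro p q
    have hp := (ContinuousLinearMap.proj p : (Fin n → ℝ) →L[ℝ] ℝ).hasFDerivAt (x := v)
    have hq := (ContinuousLinearMap.proj q : (Fin n → ℝ) →L[ℝ] ℝ).hasFDerivAt (x := v)
    have := (hp.mul hq).const_mul (Γ x c p q)
    simpa [mul_assoc, ContinuousLinearMap.proj_apply] using this
  exact (HasFDerivAt.fun_sum (fun p _ => HasFDerivAt.fun_sum (fun q _ => h p q))).fun_neg

lemma force_fderiv {n : ℕ} (Γ : (Fin n → ℝ) → Fin n → Fin n → Fin n → ℝ)
    (x : Fin n → ℝ) (hsym : ∀ a b c, Γ x a b c = Γ x a c b) (v : Fin n → ℝ) (c b : Fin n) :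
    fderiv ℝ (fun u => force Γ x u c) v (Pi.single b 1)
      = -2 * ∑ d, Γ x c b d * v d := by
  rw [(force_hasFDeriv Γ x v c).fderiv]
  simp only [ContinuousLinearMap.neg_apply, ContinuousLinearMap.coe_sum',
    Finset.sum_apply, ContinuousLinearMap.smul_apply, ContinuousLinearMap.add_apply,
    ContinuousLinearMap.proj_apply, Pi.single_apply, smul_eq_mul, mul_ite, mul_one, mul_zero]
  simp only [mul_add, mul_ite, mul_zero, Finset.sum_add_distrib, Finset.sum_ite_eq,
    Finset.sum_ite_eq', Finset.mem_univ, if_true]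
  have h1 : ∑ p, Γ x c p b * v p = ∑ p, Γ x c b p * v p :=
    Finset.sum_congr rfl (fun p _ => by rw [hsym])
  have h2 : (∑ x1 : Fin n, ∑ x2 : Fin n, if x1 = b then Γ x c x1 x2 * v x2 else 0)
      = ∑ x2, Γ x c b x2 * v x2 := by
    rw [Finset.sum_comm]
    simp
  rw [h1, h2]
  ring

/-- **Second Helmholtz condition ⟺ metric compatibility**: for the force
`F^a = −Γ^a_{bc} v^b v^c` of a symmetric connection and a velocity-independent symmetric `H`,
condition (H2) holds iff `∇_a H_{bc} = 0`. -/
theorem helmholtz_two_iff_metric_compatibility {n : ℕ} (U : Set (Fin n → ℝ)) (hU : IsOpen U)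
    (Γ : (Fin n → ℝ) → Fin n → Fin n → Fin n → ℝ)
    (hΓ : ContDiffOn ℝ (⊤ : ℕ∞) Γ U)
    (hΓsym : ∀ x ∈ U, ∀ a b c, Γ x a b c = Γ x a c b)
    (H : (Fin n → ℝ) → Fin n → Fin n → ℝ)
    (hH : ContDiffOn ℝ (⊤ : ℕ∞) H U)
    (hHsym : ∀ x ∈ U, ∀ a b, H x a b = H x b a) :
    (∀ x ∈ U, ∀ v : Fin n → ℝ, ∀ a b,
        ∑ c, v c * pd (fun y => H y a b) c x
          + (1 / 2) * ∑ c, (H x a c * fderiv ℝ (fun u => force Γ x u c) v (Pi.single b 1)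
              + H x b c * fderiv ℝ (fun u => force Γ x u c) v (Pi.single a 1)) = 0)
    ↔ (∀ x ∈ U, ∀ a b c,
        pd (fun y => H y b c) a x
          - ∑ d, (Γ x d a b * H x d c + Γ x d a c * H x b d) = 0) := by
  constructor
  · intro h x hx a b c
    have this1 := h x hx (Pi.single a 1) b c
    simp only [force_fderiv Γ x (hΓsym x hx)] at this1
    simp only [Pi.single_apply, ite_mul, one_mul, zero_mul, mul_ite, mul_one, mul_zero,
      Finset.sum_ite_eq, Finset.sum_ite_eq', Finset.mem_univ, if_true] at this1
    have key : ∑ c', (H x b c' * (-2 * Γ x c' c a) + H x c c' * (-2 * Γ x c' b a))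
        = -2 * ∑ d, (Γ x d a b * H x d c + Γ x d a c * H x b d) := by
      rw [Finset.mul_sum]
      refine Finset.sum_congr rfl fun d _ => ?_
      rw [hΓsym x hx d a b, hΓsym x hx d a c, hHsym x hx d c]
      ring
    rw [key] at this1
    linarith
  · intro h x hx v a b
    simp only [force_fderiv Γ x (hΓsym x hx)]
    have hpd : ∀ e, pd (fun y => H y a b) e x
        = ∑ d, (Γ x d e a * H x d b + Γ x d e b * H x a d) := by
      intro e
      have := h x hx e a b
      linarith
    have e1 : ∑ c', v c' * pd (fun y => H y a b) c' x
        = ∑ c', ∑ d, v c' * (Γ x d c' a * H x d b + Γ x d c' b * H x a d) :=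
      Finset.sum_congr rfl fun e _ => by rw [hpd e, Finset.mul_sum]
    have e2 : ∑ c', ∑ d, v c' * (Γ x d c' a * H x d b + Γ x d c' b * H x a d)
        = ∑ c', ∑ d, (H x a c' * (Γ x c' b d * v d) + H x b c' * (Γ x c' a d * v d)) := by
      rw [Finset.sum_comm]
      exact Finset.sum_congr rfl fun p _ => Finset.sum_congr rfl fun q _ => by
        rw [hΓsym x hx p q a, hΓsym x hx p q b, hHsym x hx p b]
        ring
    have e3 : ∀ c' : Fin n, H x a c' * (-2 * ∑ d, Γ x c' b d * v d)
          + H x b c' * (-2 * ∑ d, Γ x c' a d * v d)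
        = -2 * ∑ d, (H x a c' * (Γ x c' b d * v d) + H x b c' * (Γ x c' a d * v d)) := by
      intro c'
      simp only [Finset.mul_sum, mul_add, Finset.sum_add_distrib]
      exact congrArg₂ (· + ·) (Finset.sum_congr rfl fun d _ => by ring)
        (Finset.sum_congr rfl fun d _ => by ring)
    have e4 : ∑ c', (H x a c' * (-2 * ∑ d, Γ x c' b d * v d)
          + H x b c' * (-2 * ∑ d, Γ x c' a d * v d))
        = -2 * ∑ c', ∑ d, (H x a c' * (Γ x c' b d * v d) + H x b c' * (Γ x c' a d * v d)) := by
      rw [Finset.mul_sum]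
      exact Finset.sum_congr rfl fun c' _ => e3 c'
    rw [e1, e4]
    linarith [e2]
end

section
/- Reparametrization to affine parameter (content of Proposition 2.2 and of the affine-parametrization step in the main theorem): Let U ⊆ ℝⁿ be open, Γ^a_{bc} : U → ℝ smooth connection coefficients, I ⊆ ℝ an open interval, φ : I → ℝ smooth, and γ : I → U a smooth curve satisfying γ''^a(λ) + Σ_{b,c} Γ^a_{bc}(γ(λ)) γ'^b(λ) γ'^c(λ) = φ(λ) γ'^a(λ) for all λ ∈ I and all indices a. Then there exist an open interval J ⊆ ℝ and a smooth, strictly monotone surjective map σ : J → I such that the reparametrized curve β := γ ∘ σ satisfies the affinely parametrized autoparallel equation: β''^a(s) + Σ_{b,c} Γ^a_{bc}(β(s)) β'^b(s) β'^c(s) = 0 for all s ∈ J and all indices a. -/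
open scoped BigOperators

lemma derivs_of_contDiffOn {f : ℝ → ℝ} {I : Set ℝ} (hI : IsOpen I)
    (hf : ContDiffOn ℝ (⊤ : ℕ∞) f I) :
    (∀ x ∈ I, HasDerivAt f (deriv f x) x) ∧ ContDiffOn ℝ (⊤ : ℕ∞) (deriv f) I := by
  have h := (contDiffOn_infty_iff_deriv_of_isOpen hI).1 hf
  exact ⟨fun x hx => (h.1.differentiableAt (hI.mem_nhds hx)).hasDerivAt, h.2⟩

lemma ftc_open {f : ℝ → ℝ} {I : Set ℝ} (hI : IsOpen I) (hIoc : Set.OrdConnected I)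
    (hf : ContinuousOn f I) {l0 : ℝ} (hl0 : l0 ∈ I) :
    ∀ x ∈ I, HasDerivAt (fun u => ∫ t in l0..u, f t) (f x) x := by
  intro x hx
  exact intervalIntegral.integral_hasDerivAt_right
    ((hf.mono (hIoc.uIcc_subset hl0 hx)).intervalIntegrable)
    (hf.stronglyMeasurableAtFilter hI x hx)
    (hf.continuousAt (hI.mem_nhds hx))

-- smoothness of the primitive
lemma primitive_smooth {f : ℝ → ℝ} {I : Set ℝ} (hI : IsOpen I) (hIoc : Set.OrdConnected I)
    (hf : ContDiffOn ℝ (⊤ : ℕ∞) f I) {l0 : ℝ} (hl0 : l0 ∈ I) :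
    ContDiffOn ℝ (⊤ : ℕ∞) (fun u => ∫ t in l0..u, f t) I := by
  have hd := ftc_open hI hIoc hf.continuousOn hl0
  rw [contDiffOn_infty_iff_deriv_of_isOpen hI]
  refine ⟨fun x hx => ((hd x hx).differentiableAt).differentiableWithinAt, ?_⟩
  exact hf.congr (fun x hx => (hd x hx).deriv)

/-- **Reparametrization to affine parameter**: a curve satisfying the autoparallel equation
up to a term `φ(λ) γ'^a(λ)` can be reparametrized by a smooth, strictly monotone surjective
`σ : J → I` so that `β = γ ∘ σ` satisfies the affinely parametrized autoparallel equation. -/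
theorem reparametrize_to_affine {n : ℕ} (U : Set (Fin n → ℝ)) (hU : IsOpen U)
    (Γ : (Fin n → ℝ) → Fin n → Fin n → Fin n → ℝ)
    (hΓ : ContDiffOn ℝ (⊤ : ℕ∞) Γ U)
    (I : Set ℝ) (hI : IsOpen I) (hIconn : IsPreconnected I)
    (φ : ℝ → ℝ) (hφ : ContDiffOn ℝ (⊤ : ℕ∞) φ I)
    (γ : ℝ → Fin n → ℝ) (hγ : ContDiffOn ℝ (⊤ : ℕ∞) γ I)
    (hmaps : ∀ t ∈ I, γ t ∈ U)
    (heq : ∀ t ∈ I, ∀ a, cderiv2 γ a t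
      + ∑ b, ∑ c, Γ (γ t) a b c * cderiv γ b t * cderiv γ c t = φ t * cderiv γ a t) :
    ∃ (J : Set ℝ) (σ : ℝ → ℝ),
      IsOpen J ∧ IsPreconnected J ∧
      ContDiffOn ℝ (⊤ : ℕ∞) σ J ∧
      (StrictMonoOn σ J ∨ StrictAntiOn σ J) ∧
      σ '' J = I ∧
      ∀ s ∈ J, ∀ a, cderiv2 (γ ∘ σ) a s
        + ∑ b, ∑ c, Γ (γ (σ s)) a b c * cderiv (γ ∘ σ) b s * cderiv (γ ∘ σ) c s = 0 := by
  classical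
  have h1top : ((⊤ : ℕ∞) : WithTop ℕ∞) ≠ 0 := by simp
  rcases Set.eq_empty_or_nonempty I with hIe | ⟨l0, hl0⟩
  · refine ⟨∅, id, isOpen_empty, isPreconnected_empty, fun x hx => absurd hx (Set.notMem_empty x),
      Or.inl (fun x hx => absurd hx (Set.notMem_empty x)), by simp [hIe], fun s hs => absurd hs (Set.notMem_empty s)⟩
  have hIoc : Set.OrdConnected I := hIconn.ordConnected
  have hconv : Convex ℝ I := convex_iff_ordConnected.2 hIoc
  -- the primitive of φ
  set F : ℝ → ℝ := fun u => ∫ t in l0..u, φ t with hFdef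
  have hFd : ∀ x ∈ I, HasDerivAt F (φ x) x := ftc_open hI hIoc hφ.continuousOn hl0
  have hFsm : ContDiffOn ℝ (⊤ : ℕ∞) F I := primitive_smooth hI hIoc hφ hl0
  -- the integrating factor
  set w : ℝ → ℝ := fun u => Real.exp (F u) with hwdef
  have hwsm : ContDiffOn ℝ (⊤ : ℕ∞) w I := Real.contDiff_exp.comp_contDiffOn hFsm
  have hwpos : ∀ u, 0 < w u := fun u => Real.exp_pos _
  -- the new parameter as a function of the old one
  set s : ℝ → ℝ := fun u => ∫ t in l0..u, w t with hsdef
  have hsd : ∀ x ∈ I, HasDerivAt s (w x) x := ftc_open hI hIoc hwsm.continuousOn hl0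
  have hssm : ContDiffOn ℝ (⊤ : ℕ∞) s I := primitive_smooth hI hIoc hwsm hl0
  have hmono : StrictMonoOn s I := by
    apply strictMonoOn_of_deriv_pos hconv hssm.continuousOn
    intro x hx
    rw [hI.interior_eq] at hx
    rw [(hsd x hx).deriv]; exact hwpos x
  have hinj : Set.InjOn s I := hmono.injOn
  set J : Set ℝ := s '' I with hJdef
  set σ : ℝ → ℝ := Function.invFunOn s I with hσdef
  have hσmem : ∀ z ∈ J, σ z ∈ I := by
    rintro z ⟨x, hx, rfl⟩
    exact Function.invFunOn_mem ⟨x, hx, rfl⟩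
  have hσsect : ∀ z ∈ J, s (σ z) = z := by
    rintro z ⟨x, hx, rfl⟩
    exact Function.invFunOn_eq ⟨x, hx, rfl⟩
  have hσs : ∀ x ∈ I, σ (s x) = x := by
    intro x hx
    exact hinj (hσmem _ ⟨x, hx, rfl⟩) hx (hσsect _ ⟨x, hx, rfl⟩)
  -- J is open
  have hJopen : IsOpen J := by
    rw [isOpen_iff_mem_nhds]
    rintro z ⟨x, hx, rfl⟩
    have hne : w x ≠ 0 := (hwpos x).ne'
    have hfd : HasFDerivAt s
        ((ContinuousLinearEquiv.unitsEquivAut ℝ (Units.mk0 (w x) hne)) : ℝ →L[ℝ] ℝ) x :=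
      (hsd x hx).hasFDerivAt_equiv hne
    have hstrict := (hssm.contDiffAt (hI.mem_nhds hx)).hasStrictFDerivAt' hfd h1top
    have hmap := hstrict.map_nhds_eq_of_equiv
    rw [← hmap]
    exact Filter.image_mem_map (hI.mem_nhds hx)
  have hJconn : IsPreconnected J := hIconn.image s hssm.continuousOn
  -- smoothness of σ on J
  have hσC : ∀ z ∈ J, ContDiffAt ℝ (⊤ : ℕ∞) σ z := by
    intro z hz
    set x : ℝ := σ z with hxdef
    have hx : x ∈ I := hσmem z hz
    have hsx : s x = z := hσsect z hz
    have hne : w x ≠ 0 := (hwpos x).ne'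
    have hfd : HasFDerivAt s
        ((ContinuousLinearEquiv.unitsEquivAut ℝ (Units.mk0 (w x) hne)) : ℝ →L[ℝ] ℝ) x :=
      (hsd x hx).hasFDerivAt_equiv hne
    have hsC : ContDiffAt ℝ (⊤ : ℕ∞) s x := hssm.contDiffAt (hI.mem_nhds hx)
    have hstrict := hsC.hasStrictFDerivAt' hfd h1top
    set g : ℝ → ℝ := hsC.localInverse hfd h1top with hgdef
    have hgC : ContDiffAt ℝ (⊤ : ℕ∞) g (s x) := hsC.to_localInverse hfd h1top
    have hgcont : ContinuousAt g (s x) := hstrict.localInverse_continuousAt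
    have hgx : g (s x) = x := hstrict.localInverse_apply_image
    have hgright : ∀ᶠ u in nhds (s x), s (g u) = u := hstrict.eventually_right_inverse
    rw [hsx] at hgC hgcont hgx hgright
    have hgI : ∀ᶠ u in nhds z, g u ∈ I := by
      have := hgcont.preimage_mem_nhds (hI.mem_nhds (hgx ▸ hx))
      exact this
    have hJz : ∀ᶠ u in nhds z, u ∈ J := Filter.eventually_of_mem (hJopen.mem_nhds hz) (fun u hu => hu)
    have hσeq : σ =ᶠ[nhds z] g := by
      filter_upwards [hgright, hgI, hJz] with u h1 h2 h3
      exact hinj (hσmem u h3) h2 ((hσsect u h3).trans h1.symm)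
    exact hgC.congr_of_eventuallyEq hσeq
  have hσCOn : ContDiffOn ℝ (⊤ : ℕ∞) σ J := fun z hz => (hσC z hz).contDiffWithinAt
  -- derivative of σ
  set ρ : ℝ → ℝ := fun z => Real.exp (-(F (σ z))) with hρdef
  have hσd : ∀ z ∈ J, HasDerivAt σ (ρ z) z := by
    intro z hz
    have hx : σ z ∈ I := hσmem z hz
    have hne : w (σ z) ≠ 0 := (hwpos _).ne'
    have hfg : ∀ᶠ u in nhds z, s (σ u) = u :=
      Filter.eventually_of_mem (hJopen.mem_nhds hz) (fun u hu => hσsect u hu)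
    have h := HasDerivAt.of_local_left_inverse (hσC z hz).continuousAt (hsd _ hx) hne hfg
    have : (w (σ z))⁻¹ = ρ z := by
      simp only [hρdef, hwdef, Real.exp_neg]
    rwa [this] at h
  -- strict monotonicity of σ
  have hσmono : StrictMonoOn σ J := by
    intro z1 hz1 z2 hz2 h12
    by_contra hcon
    push_neg at hcon
    have := hmono.monotoneOn (hσmem z2 hz2) (hσmem z1 hz1) hcon
    rw [hσsect z1 hz1, hσsect z2 hz2] at this
    exact absurd this (not_le.2 h12)
  -- image
  have himg : σ '' J = I := by
    apply Set.Subset.antisymm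
    · rintro _ ⟨z, hz, rfl⟩; exact hσmem z hz
    · intro x hx; exact ⟨s x, ⟨x, hx, rfl⟩, hσs x hx⟩
  refine ⟨J, σ, hJopen, hJconn, hσCOn, Or.inl hσmono, himg, ?_⟩
  -- the main computation
  intro z hz a
  have hx : σ z ∈ I := hσmem z hz
  have hcoord : ∀ b : Fin n, ContDiffOn ℝ (⊤ : ℕ∞) (fun t => γ t b) I := fun b =>
    (ContinuousLinearMap.proj (R := ℝ) (φ := fun _ : Fin n => ℝ) b).contDiff.comp_contDiffOn hγ
  have hd1 : ∀ b : Fin n, ∀ x ∈ I, HasDerivAt (fun t => γ t b) (cderiv γ b x) x := fun b =>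
    (derivs_of_contDiffOn hI (hcoord b)).1
  have hc1 : ∀ b : Fin n, ContDiffOn ℝ (⊤ : ℕ∞) (cderiv γ b) I := fun b =>
    (derivs_of_contDiffOn hI (hcoord b)).2
  have hd2 : ∀ b : Fin n, ∀ x ∈ I, HasDerivAt (cderiv γ b) (cderiv2 γ b x) x := fun b =>
    (derivs_of_contDiffOn hI (hc1 b)).1
  have hβ1 : ∀ b : Fin n, ∀ u ∈ J, HasDerivAt (fun y => (γ ∘ σ) y b) (cderiv γ b (σ u) * ρ u) u :=
    fun b u hu => (hd1 b (σ u) (hσmem u hu)).comp u (hσd u hu)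
  have hcd1 : ∀ b : Fin n, ∀ u ∈ J, cderiv (γ ∘ σ) b u = cderiv γ b (σ u) * ρ u :=
    fun b u hu => (hβ1 b u hu).deriv
  have hρd : HasDerivAt ρ (ρ z * -(φ (σ z) * ρ z)) z := by
    have hFσ : HasDerivAt (fun u => F (σ u)) (φ (σ z) * ρ z) z :=
      (hFd (σ z) hx).comp z (hσd z hz)
    exact hFσ.neg.exp
  have h1 : HasDerivAt (fun u => cderiv γ a (σ u)) (cderiv2 γ a (σ z) * ρ z) z :=
    (hd2 a (σ z) hx).comp z (hσd z hz)
  have hprod := h1.mul hρd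
  have hev : cderiv (γ ∘ σ) a =ᶠ[nhds z] fun u => cderiv γ a (σ u) * ρ u :=
    Filter.eventually_of_mem (hJopen.mem_nhds hz) (fun u hu => hcd1 a u hu)
  have hc2 : cderiv2 (γ ∘ σ) a z
      = cderiv2 γ a (σ z) * ρ z * ρ z + cderiv γ a (σ z) * (ρ z * -(φ (σ z) * ρ z)) :=
    hev.deriv_eq.trans hprod.deriv
  have hsum : ∑ b, ∑ c, Γ (γ (σ z)) a b c * cderiv (γ ∘ σ) b z * cderiv (γ ∘ σ) c z
      = ρ z * ρ z * ∑ b, ∑ c, Γ (γ (σ z)) a b c * cderiv γ b (σ z) * cderiv γ c (σ z) := by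
    rw [Finset.mul_sum]
    refine Finset.sum_congr rfl fun b _ => ?_
    rw [Finset.mul_sum]
    refine Finset.sum_congr rfl fun c _ => ?_
    rw [hcd1 b z hz, hcd1 c z hz]; ring
  have hE := heq (σ z) hx a
  rw [hc2, hsum]
  linear_combination (ρ z * ρ z) * hE
end
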